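/- arXiv:2503.18044 — 7 statements merged into one kernel-verified Lean document; each statement's English description precedes it below -/
import Mathlib

section
/- Let G be a finite simple graph on n ≥ 3 vertices and let e be an edge of G. Then the signless Laplacian eigenvalues of G and of G − e interlace: κ_1(G) ≥ κ_1(G−e) ≥ κ_2(G) ≥ κ_2(G−e) ≥ ... ≥ κ_n(G) ≥ κ_n(G−e) ≥ 0, where κ_1 ≥ ... ≥ κ_n are the signless Laplacian eigenvalues in nonincreasing order. -/
open SimpleGraph Matrix Finset
attribute [local instance] Classical.propDecidable
set_option linter.unnecessarySimpa false

/-- The signless Laplacian matrix `Q(G) = D(G) + A(G)`. -/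
noncomputable def signlessLaplacian {V : Type*} [Fintype V] (G : SimpleGraph V) :
    Matrix V V ℝ :=
  Matrix.diagonal (fun v => (G.degree v : ℝ)) + G.adjMatrix ℝ

/-- The multiset of eigenvalues of a Hermitian real matrix. -/
noncomputable def eigMultiset {V : Type*} [Fintype V] [DecidableEq V]
    {M : Matrix V V ℝ} (hM : M.IsHermitian) : Multiset ℝ :=
  Finset.univ.val.map hM.eigenvalues

/-- The `i`-th largest eigenvalue (0-indexed) of a Hermitian real matrix. -/
noncomputable def ithEig {V : Type*} [Fintype V] [DecidableEq V]
    {M : Matrix V V ℝ} (hM : M.IsHermitian) (i : ℕ) : ℝ :=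
  ((eigMultiset hM).sort (· ≥ ·)).getD i 0

/-- The join `G ∨ H` of two graphs. -/
def joinG {α β : Type*} (G : SimpleGraph α) (H : SimpleGraph β) : SimpleGraph (α ⊕ β) where
  Adj x y :=
    match x, y with
    | Sum.inl a, Sum.inl b => G.Adj a b
    | Sum.inr a, Sum.inr b => H.Adj a b
    | Sum.inl _, Sum.inr _ => True
    | Sum.inr _, Sum.inl _ => True
  symm := by
    constructor
    rintro (a | a) (b | b) h <;> simp_all <;> exact h.symm
  loopless := by constructor; rintro (a | a) h <;> simp_all

/-- The disjoint union `G ∪ H` of two graphs. -/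
def sumG {α β : Type*} (G : SimpleGraph α) (H : SimpleGraph β) : SimpleGraph (α ⊕ β) where
  Adj x y :=
    match x, y with
    | Sum.inl a, Sum.inl b => G.Adj a b
    | Sum.inr a, Sum.inr b => H.Adj a b
    | _, _ => False
  symm := by
    constructor
    rintro (a | a) (b | b) h <;> simp_all <;> exact h.symm
  loopless := by constructor; rintro (a | a) h <;> simp_all

/-- The disjoint union of cycles `C_{l 0} ∪ ⋯ ∪ C_{l (t-1)}`. -/
def cyclesUnion (t : ℕ) (l : Fin t → ℕ) : SimpleGraph (Σ i : Fin t, Fin (l i)) where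
  Adj x y := ∃ h : x.1 = y.1, (cycleGraph (l y.1)).Adj (h ▸ x.2) y.2
  symm := by
    constructor
    rintro ⟨i, a⟩ ⟨j, b⟩ ⟨h, hadj⟩
    dsimp only at h hadj ⊢
    subst h
    exact ⟨rfl, hadj.symm⟩
  loopless := by
    constructor
    rintro ⟨i, a⟩ ⟨h, hadj⟩
    dsimp only at h hadj
    rw [eq_self_iff_true] at h
    exact (cycleGraph (l i)).loopless.irrefl a (by simpa using hadj)

section Abstract
variable {V : Type*} [Fintype V] [DecidableEq V]
set_option linter.unusedSectionVars false

open scoped RealInnerProductSpace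

/-- span of eigenvectors indexed by a finset -/
noncomputable def eigSpan {M : Matrix V V ℝ} (hM : M.IsHermitian) (s : Finset V) :
    Submodule ℝ (EuclideanSpace ℝ V) :=
  Submodule.span ℝ (hM.eigenvectorBasis '' s)

lemma eigSpan_finrank {M : Matrix V V ℝ} (hM : M.IsHermitian) (s : Finset V) :
    Module.finrank ℝ (eigSpan hM s) = s.card := by
  have h2 : LinearIndependent ℝ (fun j : (s : Set V) => hM.eigenvectorBasis j) :=
    hM.eigenvectorBasis.orthonormal.linearIndependent.comp _ Subtype.val_injective
  have := finrank_span_eq_card h2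
  have hr : (Set.range fun j : (s : Set V) => hM.eigenvectorBasis j) = hM.eigenvectorBasis '' s := by
    ext y; simp
  rw [hr] at this
  rw [eigSpan, this]
  simp

lemma repr_eq_zero_of_not_mem {M : Matrix V V ℝ} (hM : M.IsHermitian) {s : Finset V}
    {x : EuclideanSpace ℝ V} (hx : x ∈ eigSpan hM s) {j : V} (hj : j ∉ s) :
    hM.eigenvectorBasis.repr x j = 0 := by
  rw [OrthonormalBasis.repr_apply_apply]
  induction hx using Submodule.span_induction with
  | mem y hy =>
    obtain ⟨k, hk, rfl⟩ := hy
    have : j ≠ k := fun h => hj (h ▸ hk)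
    exact hM.eigenvectorBasis.orthonormal.2 this
  | zero => simp
  | add y z _ _ hy hz => rw [inner_add_right, hy, hz, add_zero]
  | smul c y _ hy => rw [inner_smul_right, hy, mul_zero]

lemma dot_eq_inner (x y : EuclideanSpace ℝ V) : ⇑x ⬝ᵥ ⇑y = ⟪x, y⟫ := by
  simp [dotProduct, PiLp.inner_apply, RCLike.inner_apply, mul_comm]

lemma dot_mulVec_eq_sum {M : Matrix V V ℝ} (hM : M.IsHermitian) (x : EuclideanSpace ℝ V) :
    ⇑x ⬝ᵥ (M *ᵥ ⇑x) = ∑ j, hM.eigenvalues j * (hM.eigenvectorBasis.repr x j)^2 := by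
  set B := hM.eigenvectorBasis with hB
  set y : EuclideanSpace ℝ V := WithLp.toLp 2 (M *ᵥ ⇑x : V → ℝ) with hy
  have hs : Mᵀ = M := by rw [← Matrix.conjTranspose_eq_transpose_of_trivial]; exact hM.eq
  have h1 : ⇑x ⬝ᵥ (M *ᵥ ⇑x) = ⟪x, y⟫ := dot_eq_inner x y
  rw [h1, ← B.sum_inner_mul_inner x y]
  refine Finset.sum_congr rfl fun j _ => ?_
  have h2 : ⟪B j, y⟫ = hM.eigenvalues j * B.repr x j := by
    rw [← dot_eq_inner]
    have h3 : ⇑(B j) ⬝ᵥ (M *ᵥ ⇑x) = (M *ᵥ ⇑(B j)) ⬝ᵥ ⇑x := by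
      rw [Matrix.dotProduct_mulVec, ← Matrix.mulVec_transpose, hs]
    show ⇑(B j) ⬝ᵥ (M *ᵥ ⇑x) = _
    rw [h3, hM.mulVec_eigenvectorBasis, smul_dotProduct, dot_eq_inner,
      ← B.repr_apply_apply]
    rfl
  have h4 : ⟪x, B j⟫ = B.repr x j := by
    rw [real_inner_comm, B.repr_apply_apply]
  rw [h2, h4]; ring

lemma dot_self_eq_sum {M : Matrix V V ℝ} (hM : M.IsHermitian) (x : EuclideanSpace ℝ V) :
    ⇑x ⬝ᵥ ⇑x = ∑ j, (hM.eigenvectorBasis.repr x j)^2 := by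
  set B := hM.eigenvectorBasis with hB
  rw [dot_eq_inner, ← B.sum_inner_mul_inner x x]
  refine Finset.sum_congr rfl fun j _ => ?_
  simp [OrthonormalBasis.repr_apply_apply, real_inner_comm x (B j), sq]

lemma dot_self_pos {x : EuclideanSpace ℝ V} (hx : x ≠ 0) : 0 < ⇑x ⬝ᵥ ⇑x := by
  rw [dot_eq_inner, real_inner_self_eq_norm_sq]
  have : ‖x‖ ≠ 0 := norm_ne_zero_iff.mpr hx
  positivity

lemma rayleigh_le {M : Matrix V V ℝ} (hM : M.IsHermitian) {s : Finset V}
    {x : EuclideanSpace ℝ V} (hx : x ∈ eigSpan hM s) {c : ℝ}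
    (hc : ∀ j ∈ s, hM.eigenvalues j ≤ c) : ⇑x ⬝ᵥ (M *ᵥ ⇑x) ≤ c * (⇑x ⬝ᵥ ⇑x) := by
  rw [dot_mulVec_eq_sum hM, dot_self_eq_sum hM, Finset.mul_sum]
  refine Finset.sum_le_sum fun j _ => ?_
  by_cases hj : j ∈ s
  · have := hc j hj; nlinarith [sq_nonneg (hM.eigenvectorBasis.repr x j)]
  · rw [repr_eq_zero_of_not_mem hM hx hj]; simp

lemma rayleigh_ge {M : Matrix V V ℝ} (hM : M.IsHermitian) {s : Finset V}
    {x : EuclideanSpace ℝ V} (hx : x ∈ eigSpan hM s) {c : ℝ}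
    (hc : ∀ j ∈ s, c ≤ hM.eigenvalues j) : c * (⇑x ⬝ᵥ ⇑x) ≤ ⇑x ⬝ᵥ (M *ᵥ ⇑x) := by
  rw [dot_mulVec_eq_sum hM, dot_self_eq_sum hM, Finset.mul_sum]
  refine Finset.sum_le_sum fun j _ => ?_
  by_cases hj : j ∈ s
  · have := hc j hj; nlinarith [sq_nonneg (hM.eigenvectorBasis.repr x j)]
  · rw [repr_eq_zero_of_not_mem hM hx hj]; simp

lemma finrank_inf_lower {E : Type*} [AddCommGroup E] [Module ℝ E] [FiniteDimensional ℝ E]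
    (S T : Submodule ℝ E) :
    Module.finrank ℝ S + Module.finrank ℝ T ≤
      Module.finrank ℝ E + Module.finrank ℝ (S ⊓ T : Submodule ℝ E) := by
  have h1 := Submodule.finrank_sup_add_finrank_inf_eq S T
  have h2 : Module.finrank ℝ (S ⊔ T : Submodule ℝ E) ≤ Module.finrank ℝ E :=
    Submodule.finrank_le _
  omega

lemma exists_ne_zero_mem_inf {E : Type*} [AddCommGroup E] [Module ℝ E] [FiniteDimensional ℝ E]
    (S T : Submodule ℝ E)
    (h : Module.finrank ℝ E < Module.finrank ℝ S + Module.finrank ℝ T) :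
    ∃ x, x ∈ S ∧ x ∈ T ∧ x ≠ 0 := by
  have h1 := finrank_inf_lower S T
  have h2 : 0 < Module.finrank ℝ (S ⊓ T : Submodule ℝ E) := by omega
  have h3 : (S ⊓ T : Submodule ℝ E) ≠ ⊥ := by
    intro hb
    rw [hb, finrank_bot] at h2
    omega
  obtain ⟨x, hx, hx0⟩ := Submodule.exists_mem_ne_zero_of_ne_bot h3
  exact ⟨x, hx.1, hx.2, hx0⟩

lemma exists_sorted_equiv {M : Matrix V V ℝ} (hM : M.IsHermitian) :
    ∃ σ : Fin (Fintype.card V) ≃ V,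
      (∀ i j : Fin (Fintype.card V), i ≤ j → hM.eigenvalues (σ j) ≤ hM.eigenvalues (σ i)) ∧
      ∀ i : Fin (Fintype.card V), ithEig hM i = hM.eigenvalues (σ i) := by
  classical
  set n := Fintype.card V with hn
  set ε : Fin n ≃ V := (Fintype.equivFin V).symm with hε
  set f : Fin n → ℝ := fun i => hM.eigenvalues (ε i) with hf
  set π := Tuple.sort f with hπ
  set σ : Fin n ≃ V := (Fin.revPerm.trans π).trans ε with hσ
  have hanti : ∀ i j : Fin n, i ≤ j → hM.eigenvalues (σ j) ≤ hM.eigenvalues (σ i) := by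
    intro i j hij
    have : j.rev ≤ i.rev := Fin.rev_le_rev.mpr hij
    exact Tuple.monotone_sort f this
  refine ⟨σ, hanti, ?_⟩
  have hL : (eigMultiset hM).sort (· ≥ ·) = List.ofFn (fun i => hM.eigenvalues (σ i)) := by
    refine (fun hp hs => List.Perm.eq_of_pairwise' (r := (· ≥ ·)) (Multiset.pairwise_sort _ _) hs hp) ?_ ?_
    · rw [← Multiset.coe_eq_coe]
      rw [Multiset.sort_eq]
      have h1 : (List.ofFn (fun i => hM.eigenvalues (σ i)) : Multiset ℝ)
          = (Finset.univ.val : Multiset (Fin n)).map (fun i => hM.eigenvalues (σ i)) := by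
        rw [Fin.univ_val_map]
      have h2 : (Finset.univ.val : Multiset (Fin n)).map ⇑σ = (Finset.univ.val : Multiset V) := by
        have h := Finset.map_univ_equiv σ
        calc (Finset.univ.val : Multiset (Fin n)).map ⇑σ
            = (Finset.univ.map σ.toEmbedding).val := rfl
          _ = (Finset.univ : Finset V).val := by rw [h]
      rw [eigMultiset, h1, show (fun i => hM.eigenvalues (σ i)) = hM.eigenvalues ∘ ⇑σ from rfl,
        ← Multiset.map_map, h2]
    · rw [List.pairwise_ofFn]
      intro i j hij
      exact hanti i j (le_of_lt hij)
  intro i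
  rw [ithEig, hL, List.getD_eq_getElem?_getD]
  simp [List.getElem?_ofFn, i.isLt]

noncomputable def signlessLaplacian' (G : SimpleGraph V) : Matrix V V ℝ :=
  Matrix.diagonal (fun v => (G.degree v : ℝ)) + G.adjMatrix ℝ

lemma sl_eq (G : SimpleGraph V) : signlessLaplacian' G = signlessLaplacian G := by
  unfold signlessLaplacian' signlessLaplacian
  congr!

lemma qform (G : SimpleGraph V) (x : V → ℝ) :
    x ⬝ᵥ (signlessLaplacian G *ᵥ x)
      = ∑ a, ∑ b, (if G.Adj a b then x a ^ 2 + x a * x b else 0) := by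
  rw [← sl_eq]
  have hdeg : ∀ a, ((G.degree a : ℝ)) = ∑ b, (if G.Adj a b then (1:ℝ) else 0) := by
    intro a
    rw [Finset.sum_boole, SimpleGraph.degree, SimpleGraph.neighborFinset_eq_filter]
  rw [signlessLaplacian', Matrix.add_mulVec, dotProduct_add]
  have hdiag : x ⬝ᵥ (Matrix.diagonal (fun v => (G.degree v : ℝ)) *ᵥ x)
      = ∑ a, ∑ b, (if G.Adj a b then x a ^ 2 else 0) := by
    rw [dotProduct]
    refine Finset.sum_congr rfl fun a _ => ?_
    rw [Matrix.mulVec_diagonal, hdeg a, Finset.sum_mul, Finset.mul_sum]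
    refine Finset.sum_congr rfl fun b _ => ?_
    by_cases h : G.Adj a b <;> simp [h] <;> ring
  have hadj : x ⬝ᵥ (G.adjMatrix ℝ *ᵥ x)
      = ∑ a, ∑ b, (if G.Adj a b then x a * x b else 0) := by
    rw [dotProduct]
    refine Finset.sum_congr rfl fun a _ => ?_
    rw [Matrix.mulVec, dotProduct, Finset.mul_sum]
    refine Finset.sum_congr rfl fun b _ => ?_
    rw [SimpleGraph.adjMatrix_apply]
    by_cases h : G.Adj a b <;> simp [h] <;> ring
  rw [hdiag, hadj, ← Finset.sum_add_distrib]
  refine Finset.sum_congr rfl fun a _ => ?_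
  rw [← Finset.sum_add_distrib]
  refine Finset.sum_congr rfl fun b _ => ?_
  by_cases h : G.Adj a b <;> simp [h]

lemma qform_nonneg (G : SimpleGraph V) (x : V → ℝ) :
    0 ≤ x ⬝ᵥ (signlessLaplacian G *ᵥ x) := by
  rw [qform]
  set F : V → V → ℝ := fun a b => if G.Adj a b then x a ^ 2 + x a * x b else 0 with hF
  have hsw : ∑ a, ∑ b, F a b = ∑ a, ∑ b, F b a := Finset.sum_comm
  have hsplit : ∑ a, ∑ b, (F a b + F b a) = (∑ a, ∑ b, F a b) + (∑ a, ∑ b, F b a) := by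
    rw [← Finset.sum_add_distrib]
    exact Finset.sum_congr rfl fun a _ => by rw [← Finset.sum_add_distrib]
  have hnn : 0 ≤ ∑ a, ∑ b, (F a b + F b a) := by
    refine Finset.sum_nonneg fun a _ => Finset.sum_nonneg fun b _ => ?_
    by_cases h : G.Adj a b
    · have h' : G.Adj b a := h.symm
      simp only [hF, h, h', if_true]
      nlinarith [sq_nonneg (x a + x b)]
    · have h' : ¬ G.Adj b a := fun hc => h hc.symm
      simp [hF, h, h']
  rw [hsw] at hsplit
  linarith [hsplit, hnn]

lemma qform_delete (G : SimpleGraph V) {u v : V} (huv : G.Adj u v) (x : V → ℝ) :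
    x ⬝ᵥ (signlessLaplacian G *ᵥ x)
      = x ⬝ᵥ (signlessLaplacian (G.deleteEdges {s(u,v)}) *ᵥ x) + (x u + x v)^2 := by
  rw [qform, qform]
  have hne : u ≠ v := G.ne_of_adj huv
  have key : ∀ a b : V, (if G.Adj a b then x a ^ 2 + x a * x b else 0)
      = (if (G.deleteEdges {s(u,v)}).Adj a b then x a ^ 2 + x a * x b else 0)
        + ((if a = u ∧ b = v then x a ^ 2 + x a * x b else 0)
        + (if a = v ∧ b = u then x a ^ 2 + x a * x b else 0)) := by
    intro a b
    by_cases h : G.Adj a b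
    · by_cases h2 : s(a,b) = s(u,v)
      · have hd : ¬ (G.deleteEdges {s(u,v)}).Adj a b := by
          simp [SimpleGraph.deleteEdges_adj, h2]
        rw [Sym2.eq_iff] at h2
        rcases h2 with ⟨rfl, rfl⟩ | ⟨rfl, rfl⟩
        · simp [hd, hne, h]
        · simp [hd, hne.symm, h]
      · have hd : (G.deleteEdges {s(u,v)}).Adj a b := by
          simp [SimpleGraph.deleteEdges_adj, h, h2]
        have h3 : ¬(a = u ∧ b = v) := fun hc => h2 (by rw [hc.1, hc.2])
        have h4 : ¬(a = v ∧ b = u) := fun hc => h2 (by rw [hc.1, hc.2, Sym2.eq_swap])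
        simp [h, hd, h3, h4]
    · have hd : ¬(G.deleteEdges {s(u,v)}).Adj a b := fun hc => h hc.1
      have h3 : ¬(a = u ∧ b = v) := fun hc => h (hc.1 ▸ hc.2 ▸ huv)
      have h4 : ¬(a = v ∧ b = u) := fun hc => h (hc.1 ▸ hc.2 ▸ huv.symm)
      simp [h, hd, h3, h4]
  have hsum : ∑ a, ∑ b, (if G.Adj a b then x a ^ 2 + x a * x b else 0)
      = (∑ a, ∑ b, (if (G.deleteEdges {s(u,v)}).Adj a b then x a ^ 2 + x a * x b else 0))
        + ((∑ a, ∑ b, (if a = u ∧ b = v then x a ^ 2 + x a * x b else 0))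
        + (∑ a, ∑ b, (if a = v ∧ b = u then x a ^ 2 + x a * x b else 0))) := by
    rw [← Finset.sum_add_distrib, ← Finset.sum_add_distrib]
    refine Finset.sum_congr rfl fun a _ => ?_
    rw [← Finset.sum_add_distrib, ← Finset.sum_add_distrib]
    exact Finset.sum_congr rfl fun b _ => key a b
  rw [hsum]
  have e1 : (∑ a, ∑ b, (if a = u ∧ b = v then x a ^ 2 + x a * x b else 0)) = x u ^ 2 + x u * x v := by
    simp [ite_and, Finset.sum_ite_eq, Finset.sum_ite_eq']
  have e2 : (∑ a, ∑ b, (if a = v ∧ b = u then x a ^ 2 + x a * x b else 0)) = x v ^ 2 + x v * x u := by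
    simp [ite_and, Finset.sum_ite_eq, Finset.sum_ite_eq']
  rw [e1, e2]
  ring

lemma eig_last_nonneg (G : SimpleGraph V) (hQ : (signlessLaplacian G).IsHermitian) (j : V) :
    0 ≤ hQ.eigenvalues j := by
  set x := hQ.eigenvectorBasis j with hx
  have hx0 : x ≠ 0 := hQ.eigenvectorBasis.orthonormal.ne_zero j
  have hc : 0 < ⇑x ⬝ᵥ ⇑x := dot_self_pos hx0
  have h1 : ⇑x ⬝ᵥ ((signlessLaplacian G) *ᵥ ⇑x) = hQ.eigenvalues j * (⇑x ⬝ᵥ ⇑x) := by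
    rw [hQ.mulVec_eigenvectorBasis, dotProduct_smul]
    simp [smul_eq_mul, hx]
  have h2 := qform_nonneg G ⇑x
  nlinarith


end Abstract

theorem interlacing_deleteEdge {V : Type*} [Fintype V] [DecidableEq V]
    (G : SimpleGraph V) (hn : 3 ≤ Fintype.card V) (e : Sym2 V) (he : e ∈ G.edgeSet)
    (hQ : (signlessLaplacian G).IsHermitian)
    (hQ' : (signlessLaplacian (G.deleteEdges {e})).IsHermitian) :
    (∀ i, i < Fintype.card V →
      ithEig hQ' i ≤ ithEig hQ i ∧
        (i + 1 < Fintype.card V → ithEig hQ (i + 1) ≤ ithEig hQ' i)) ∧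
      0 ≤ ithEig hQ' (Fintype.card V - 1) := by
  classical
  revert he hQ'
  induction e using Sym2.ind with | _ u v => ?_
  intro he hQ'
  have huv : G.Adj u v := G.mem_edgeSet.mp he
  have hne : u ≠ v := G.ne_of_adj huv
  set n := Fintype.card V with hcard
  obtain ⟨σB, hBanti, hBeq⟩ := exists_sorted_equiv hQ
  obtain ⟨σA, hAanti, hAeq⟩ := exists_sorted_equiv hQ'
  have hrank : Module.finrank ℝ (EuclideanSpace ℝ V) = n := finrank_euclideanSpace
  set w : EuclideanSpace ℝ V :=
    WithLp.toLp 2 (fun a => (if a = u then (1:ℝ) else 0) + (if a = v then 1 else 0)) with hw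
  have hw0 : w ≠ 0 := by
    intro h
    have : w u = 0 := by rw [h]; rfl
    simp [hw, hne] at this
  have hWperp : ∀ x : EuclideanSpace ℝ V, x ∈ (ℝ ∙ w)ᗮ → x u + x v = 0 := by
    intro x hx
    have h := Submodule.mem_orthogonal_singleton_iff_inner_right.mp hx
    rw [← dot_eq_inner] at h
    simpa [hw, dotProduct, add_mul, ite_mul, Finset.sum_add_distrib, hne] using h
  have hWrank : Module.finrank ℝ ((ℝ ∙ w)ᗮ : Submodule ℝ (EuclideanSpace ℝ V)) = n - 1 := by
    have h1 := Submodule.finrank_add_finrank_orthogonal (K := (ℝ ∙ w))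
    rw [finrank_span_singleton hw0, hrank] at h1
    omega
  constructor
  · intro i hi
    constructor
    · -- ithEig hQ' i ≤ ithEig hQ i
      set ii : Fin n := ⟨i, hi⟩ with hii
      set S := eigSpan hQ' (Finset.image σA (Finset.Iic ii)) with hS
      set T := eigSpan hQ (Finset.image σB (Finset.Ici ii)) with hT
      have hSr : Module.finrank ℝ S = i + 1 := by
        rw [hS, eigSpan_finrank, Finset.card_image_of_injective _ σA.injective, Fin.card_Iic]
      have hTr : Module.finrank ℝ T = n - i := by
        rw [hT, eigSpan_finrank, Finset.card_image_of_injective _ σB.injective, Fin.card_Ici]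
      obtain ⟨x, hxS, hxT, hx0⟩ := exists_ne_zero_mem_inf S T (by rw [hrank, hSr, hTr]; omega)
      have hc : 0 < ⇑x ⬝ᵥ ⇑x := dot_self_pos hx0
      have hA : ithEig hQ' i * (⇑x ⬝ᵥ ⇑x) ≤ ⇑x ⬝ᵥ (signlessLaplacian (G.deleteEdges {s(u,v)}) *ᵥ ⇑x) := by
        refine rayleigh_ge hQ' hxS ?_
        intro j hj
        obtain ⟨k, hk, rfl⟩ := Finset.mem_image.mp hj
        have := hAanti k ii (Finset.mem_Iic.mp hk)
        calc ithEig hQ' i = hQ'.eigenvalues (σA ii) := hAeq ii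
          _ ≤ hQ'.eigenvalues (σA k) := hAanti k ii (Finset.mem_Iic.mp hk)
      have hB : ⇑x ⬝ᵥ (signlessLaplacian G *ᵥ ⇑x) ≤ ithEig hQ i * (⇑x ⬝ᵥ ⇑x) := by
        refine rayleigh_le hQ hxT ?_
        intro j hj
        obtain ⟨k, hk, rfl⟩ := Finset.mem_image.mp hj
        calc hQ.eigenvalues (σB k) ≤ hQ.eigenvalues (σB ii) := hBanti ii k (Finset.mem_Ici.mp hk)
          _ = ithEig hQ i := (hBeq ii).symm
      have hmid : ⇑x ⬝ᵥ (signlessLaplacian (G.deleteEdges {s(u,v)}) *ᵥ ⇑x)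
          ≤ ⇑x ⬝ᵥ (signlessLaplacian G *ᵥ ⇑x) := by
        rw [qform_delete G huv ⇑x]
        nlinarith [sq_nonneg ((⇑x : V → ℝ) u + (⇑x : V → ℝ) v)]
      have := le_trans (le_trans hA hmid) hB
      exact le_of_mul_le_mul_right this hc
    · -- ithEig hQ (i+1) ≤ ithEig hQ' i
      intro hi2
      set ii : Fin n := ⟨i, hi⟩ with hii
      set jj : Fin n := ⟨i + 1, hi2⟩ with hjj
      set S := eigSpan hQ (Finset.image σB (Finset.Iic jj)) with hS
      set T := eigSpan hQ' (Finset.image σA (Finset.Ici ii)) with hT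
      set W : Submodule ℝ (EuclideanSpace ℝ V) := (ℝ ∙ w)ᗮ with hWdef
      have hSr : Module.finrank ℝ S = i + 2 := by
        rw [hS, eigSpan_finrank, Finset.card_image_of_injective _ σB.injective, Fin.card_Iic]
      have hTr : Module.finrank ℝ T = n - i := by
        rw [hT, eigSpan_finrank, Finset.card_image_of_injective _ σA.injective, Fin.card_Ici]
      have hTW : n - i - 1 ≤ Module.finrank ℝ (T ⊓ W : Submodule ℝ (EuclideanSpace ℝ V)) := by
        have := finrank_inf_lower T W
        rw [hrank, hTr, hWrank] at this
        omega
      obtain ⟨x, hxS, hxTW, hx0⟩ := exists_ne_zero_mem_inf S (T ⊓ W)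
        (by rw [hrank, hSr]; omega)
      have hxT : x ∈ T := hxTW.1
      have hxW : x ∈ W := hxTW.2
      have hc : 0 < ⇑x ⬝ᵥ ⇑x := dot_self_pos hx0
      have hB : ithEig hQ (i+1) * (⇑x ⬝ᵥ ⇑x) ≤ ⇑x ⬝ᵥ (signlessLaplacian G *ᵥ ⇑x) := by
        refine rayleigh_ge hQ hxS ?_
        intro j hj
        obtain ⟨k, hk, rfl⟩ := Finset.mem_image.mp hj
        calc ithEig hQ (i+1) = hQ.eigenvalues (σB jj) := hBeq jj
          _ ≤ hQ.eigenvalues (σB k) := hBanti k jj (Finset.mem_Iic.mp hk)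
      have hA : ⇑x ⬝ᵥ (signlessLaplacian (G.deleteEdges {s(u,v)}) *ᵥ ⇑x)
          ≤ ithEig hQ' i * (⇑x ⬝ᵥ ⇑x) := by
        refine rayleigh_le hQ' hxT ?_
        intro j hj
        obtain ⟨k, hk, rfl⟩ := Finset.mem_image.mp hj
        calc hQ'.eigenvalues (σA k) ≤ hQ'.eigenvalues (σA ii) := hAanti ii k (Finset.mem_Ici.mp hk)
          _ = ithEig hQ' i := (hAeq ii).symm
      have hzero : x u + x v = 0 := hWperp x hxW
      have hmid : ⇑x ⬝ᵥ (signlessLaplacian G *ᵥ ⇑x)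
          = ⇑x ⬝ᵥ (signlessLaplacian (G.deleteEdges {s(u,v)}) *ᵥ ⇑x) := by
        rw [qform_delete G huv ⇑x]
        have h0 : (⇑x : V → ℝ) u + (⇑x : V → ℝ) v = 0 := hzero
        rw [h0]
        ring
      rw [hmid] at hB
      exact le_of_mul_le_mul_right (le_trans hB hA) hc
  · have hlt : n - 1 < n := by omega
    set ii : Fin n := ⟨n - 1, hlt⟩ with hii
    have := hAeq ii
    rw [show ((ii : Fin n) : ℕ) = n - 1 from rfl] at this
    rw [this]
    exact eig_last_nonneg _ hQ' (σA ii)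
end

section
/- Let G be a finite simple graph, U = {u_1, ..., u_s} a subset of its vertices, and H = G[U] the induced subgraph. If 0 ≤ c_j ≤ d_G(u_j) for all j, then for every 1 ≤ i ≤ s, the i-th largest signless Laplacian eigenvalue of G satisfies κ_i(G) ≥ θ_i(diag(c_1,...,c_s) + A(H)), where θ_i denotes the i-th largest eigenvalue of the indicated s × s symmetric matrix. -/
open SimpleGraph Matrix Finset
attribute [local instance] Classical.propDecidable
set_option linter.unnecessarySimpa false

section auxiliary

lemma sorted_getD_iff : ∀ (L : List ℝ), L.Pairwise (· ≥ ·) → ∀ i, i < L.length → ∀ θ : ℝ,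
    (θ ≤ L.getD i 0 ↔ i + 1 ≤ L.countP (fun x => decide (θ ≤ x))) := by
  intro L
  induction L with
  | nil => intro _ i hi; simp at hi
  | cons x L ih =>
    intro hs i hi θ
    have hx : ∀ y ∈ L, y ≤ x := fun y hy => (List.pairwise_cons.mp hs).1 y hy
    have hL : L.Pairwise (· ≥ ·) := (List.pairwise_cons.mp hs).2
    rw [List.countP_cons]
    cases i with
    | zero =>
      simp only [List.getD_cons_zero]
      constructor
      · intro h
        have : decide (θ ≤ x) = true := by simpa using h
        simp [this]
      · intro h
        by_cases hpx : θ ≤ x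
        · exact hpx
        · have : 1 ≤ L.countP (fun y => decide (θ ≤ y)) := by
            simpa [hpx] using h
          obtain ⟨y, hy, hpy⟩ := List.countP_pos_iff.mp this
          exact le_trans (by simpa using hpy) (hx y hy)
    | succ i =>
      simp only [List.getD_cons_succ]
      have hi' : i < L.length := by simpa using hi
      by_cases hpx : θ ≤ x
      · rw [ih hL i hi' θ]
        simp [hpx]
      · have h0 : L.countP (fun y => decide (θ ≤ y)) = 0 := by
          rw [List.countP_eq_zero]
          intro y hy
          simp only [decide_eq_true_eq]
          exact fun hc => hpx (le_trans hc (hx y hy))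
        have hmem : L.getD i 0 ∈ L := by
          rw [List.getD_eq_getElem _ _ hi']
          exact List.getElem_mem _
        have hfalse1 : ¬ θ ≤ L.getD i 0 := fun h => hpx (le_trans h (hx _ hmem))
        rw [h0]
        rw [if_neg (by simpa using hpx), add_zero]
        constructor
        · exact fun h => absurd h hfalse1
        · omega

lemma ithEig_le_iff {ι : Type*} [Fintype ι] [DecidableEq ι] {A : Matrix ι ι ℝ}
    (hA : A.IsHermitian) {i : ℕ} (hi : i < Fintype.card ι) (θ : ℝ) :
    θ ≤ ithEig hA i ↔ i + 1 ≤ (univ.filter fun j => θ ≤ hA.eigenvalues j).card := by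
  set L := (eigMultiset hA).sort (· ≥ ·) with hLdef
  have hlen : L.length = Fintype.card ι := by
    simp [hLdef, eigMultiset]
  have hsort : L.Pairwise (· ≥ ·) := Multiset.pairwise_sort _ _
  have hcount : L.countP (fun x => decide (θ ≤ x)) =
      (univ.filter fun j => θ ≤ hA.eigenvalues j).card := by
    have h1 : (L : Multiset ℝ).countP (fun x => θ ≤ x) = L.countP (fun x => decide (θ ≤ x)) :=
      Multiset.coe_countP _ _
    rw [← h1, hLdef, Multiset.sort_eq, eigMultiset, Multiset.countP_map]
    rw [Finset.card_filter]
    simp [Multiset.countP_eq_card_filter, Finset.filter]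
  rw [ithEig, ← hLdef, sorted_getD_iff L hsort i (by omega) θ, hcount]

variable {ι : Type*} [Fintype ι] [DecidableEq ι] {A : Matrix ι ι ℝ}

omit [Fintype ι] [DecidableEq ι] in
lemma star_eq_transpose_real (U : Matrix ι ι ℝ) : star U = Uᵀ := by
  ext i j; simp [Matrix.star_apply]

omit [DecidableEq ι] in
lemma dot_mulVec_right (U : Matrix ι ι ℝ) (x z : ι → ℝ) :
    x ⬝ᵥ (U *ᵥ z) = (star U *ᵥ x) ⬝ᵥ z := by
  rw [star_eq_transpose_real, Matrix.mulVec_transpose, Matrix.dotProduct_mulVec]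

lemma dot_mulVec_left {m n : Type*} [Fintype m] [Fintype n] (A : Matrix m n ℝ)
    (z : n → ℝ) (w : m → ℝ) : (A *ᵥ z) ⬝ᵥ w = z ⬝ᵥ (Aᵀ *ᵥ w) := by
  rw [dotProduct_comm, Matrix.dotProduct_mulVec, ← Matrix.mulVec_transpose, dotProduct_comm]

lemma quad_expand (hA : A.IsHermitian) (x : ι → ℝ) :
    x ⬝ᵥ (A *ᵥ x) = ∑ v, hA.eigenvalues v *
      ((star (hA.eigenvectorUnitary : Matrix ι ι ℝ) *ᵥ x) v)^2 ∧
    x ⬝ᵥ x = ∑ v, ((star (hA.eigenvectorUnitary : Matrix ι ι ℝ) *ᵥ x) v)^2 := by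
  set U : Matrix ι ι ℝ := (hA.eigenvectorUnitary : Matrix ι ι ℝ) with hU
  set c : ι → ℝ := star U *ᵥ x with hc
  have hU2 : U * star U = 1 := mem_unitaryGroup_iff.mp hA.eigenvectorUnitary.2
  have hU1 : star U * U = 1 := mem_unitaryGroup_iff'.mp hA.eigenvectorUnitary.2
  constructor
  · conv_lhs => rw [hA.spectral_theorem, Unitary.conjStarAlgAut_apply]
    rw [← Matrix.mulVec_mulVec, ← Matrix.mulVec_mulVec, dot_mulVec_right]
    simp only [← hU, ← hc]
    simp [Matrix.mulVec_diagonal, dotProduct, RCLike.ofReal_real_eq_id]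
    exact Finset.sum_congr rfl fun v _ => by ring
  · conv_lhs => rw [show x = (U * star U) *ᵥ x by rw [hU2, Matrix.one_mulVec],
      ← Matrix.mulVec_mulVec]
    rw [dot_mulVec_right, Matrix.mulVec_mulVec, hU1, Matrix.one_mulVec]
    simp only [← hU, ← hc, dotProduct]
    exact Finset.sum_congr rfl fun v _ => by ring

end auxiliary

theorem eigenvalue_lower_bound_induced {V : Type*} [Fintype V] [DecidableEq V]
    (G : SimpleGraph V) (s : ℕ) (u : Fin s → V) (hu : Function.Injective u)
    (c : Fin s → ℝ) (hc : ∀ j, 0 ≤ c j ∧ c j ≤ (G.degree (u j) : ℝ))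
    (hQ : (signlessLaplacian G).IsHermitian)
    (M : Matrix (Fin s) (Fin s) ℝ)
    (hMdef : M = Matrix.of fun j k =>
      (if j = k then c j else 0) + (if G.Adj (u j) (u k) then 1 else 0))
    (hM : M.IsHermitian) :
    ∀ i, i < s → ithEig hM i ≤ ithEig hQ i := by
  intro i hi
  set θ := ithEig hM i with hθdef
  have hsV : s ≤ Fintype.card V := by
    simpa using Fintype.card_le_of_injective u hu
  set T : Finset (Fin s) := univ.filter (fun j => θ ≤ hM.eigenvalues j) with hTdef
  set S : Finset V := univ.filter (fun v => θ ≤ hQ.eigenvalues v) with hSdef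
  have hT : i + 1 ≤ T.card := by
    have := (ithEig_le_iff hM (i := i) (by simpa using hi) θ).mp le_rfl
    simpa [hTdef] using this
  rw [show (ithEig hM i ≤ ithEig hQ i) = (θ ≤ ithEig hQ i) from rfl,
    ithEig_le_iff hQ (lt_of_lt_of_le hi hsV) θ]
  refine le_trans hT ?_
  show T.card ≤ S.card
  by_contra hTS
  push_neg at hTS
  -- set up the matrices
  set UQ : Matrix V V ℝ := (hQ.eigenvectorUnitary : Matrix V V ℝ) with hUQ
  set UM : Matrix (Fin s) (Fin s) ℝ := (hM.eigenvectorUnitary : Matrix (Fin s) (Fin s) ℝ) with hUM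
  set E : Matrix V (Fin s) ℝ := Matrix.of (fun v j => if u j = v then 1 else 0) with hE
  set φ : ({j // j ∈ T} → ℝ) →ₗ[ℝ] ({v // v ∈ S} → ℝ) :=
    (LinearMap.funLeft ℝ ℝ (fun v : {v // v ∈ S} => (v : V))).comp
      ((Matrix.mulVecLin (star UQ)).comp ((Matrix.mulVecLin E).comp
        ((Matrix.mulVecLin UM).comp
          (Function.ExtendByZero.linearMap ℝ (fun j : {j // j ∈ T} => (j : Fin s)))))) with hφ
  have hninj : ¬ Function.Injective φ := by
    intro hinj
    have hle := LinearMap.finrank_le_finrank_of_injective hinj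
    rw [Module.finrank_pi, Module.finrank_pi] at hle
    simp only [Fintype.card_coe] at hle
    omega
  obtain ⟨a1, a2, hab, hne⟩ := Function.not_injective_iff.mp hninj
  set a := a1 - a2 with ha
  have ha0 : a ≠ 0 := sub_ne_zero.mpr hne
  have hφa : φ a = 0 := by rw [ha, map_sub, hab, sub_self]
  set w : Fin s → ℝ := Function.extend (fun j : {j // j ∈ T} => (j : Fin s)) a 0 with hw
  have hwT : ∀ j, w j ≠ 0 → j ∈ T := by
    intro j hj
    by_contra hjT
    exact hj (Function.extend_apply' _ _ _ (by rintro ⟨⟨k, hk⟩, rfl⟩; exact hjT hk))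
  have hwne : ∃ j, w j ≠ 0 := by
    obtain ⟨j, hj⟩ := Function.ne_iff.mp ha0
    refine ⟨(j : Fin s), ?_⟩
    rw [hw, Function.Injective.extend_apply (fun a b h => Subtype.ext h)]
    simpa using hj
  set y : Fin s → ℝ := UM *ᵥ w with hy
  set xx : V → ℝ := E *ᵥ y with hx
  set cQ : V → ℝ := star UQ *ᵥ xx with hcQ
  have hUM1 : star UM * UM = 1 := mem_unitaryGroup_iff'.mp hM.eigenvectorUnitary.2
  have hcM : star UM *ᵥ y = w := by rw [hy, Matrix.mulVec_mulVec, hUM1, Matrix.one_mulVec]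
  have hcS : ∀ v (hv : v ∈ S), cQ v = 0 := by
    intro v hv
    have h := congrFun hφa ⟨v, hv⟩
    simp [hφ, LinearMap.funLeft, Matrix.mulVecLin_apply, hcQ, hx, hy, hw] at h ⊢
    exact h
  -- quadratic forms of M
  have hqM := quad_expand hM y
  rw [← hUM, hcM] at hqM
  have hqQ := quad_expand hQ xx
  rw [← hUQ, ← hcQ] at hqQ
  clear_value w y xx cQ
  have hpos : 0 < ∑ j, (w j) ^ 2 := by
    obtain ⟨j0, hj0⟩ := hwne
    refine Finset.sum_pos' (fun j _ => sq_nonneg _) ⟨j0, Finset.mem_univ _, ?_⟩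
    exact lt_of_le_of_ne (sq_nonneg _) (Ne.symm (pow_ne_zero 2 hj0))
  have hstep1 : θ * (y ⬝ᵥ y) ≤ y ⬝ᵥ (M *ᵥ y) := by
    rw [hqM.1, hqM.2, Finset.mul_sum]
    refine Finset.sum_le_sum fun j _ => ?_
    by_cases hj : w j = 0
    · simp [hj]
    · have hjT := hwT j hj
      rw [hTdef] at hjT
      exact mul_le_mul_of_nonneg_right (Finset.mem_filter.mp hjT).2 (sq_nonneg _)
  -- the E matrix identities
  have hEtE : Eᵀ * E = (1 : Matrix (Fin s) (Fin s) ℝ) := by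
    ext j k
    simp only [Matrix.mul_apply, Matrix.transpose_apply, hE, Matrix.of_apply, ite_mul, one_mul,
      zero_mul, Finset.sum_ite_eq, Finset.mem_univ, if_true, Matrix.one_apply]
    by_cases h : j = k
    · simp [h]
    · rw [if_neg (fun huk => h (hu huk).symm), if_neg h]
  have hconj : ∀ (B : Matrix V V ℝ) (j k : Fin s),
      (Eᵀ * B * E) j k = B (u j) (u k) := by
    intro B j k
    have h1 : ∀ w', (Eᵀ * B) j w' = B (u j) w' := by
      intro w'
      simp [Matrix.mul_apply, Matrix.transpose_apply, hE, ite_mul, Finset.sum_ite_eq]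
    rw [Matrix.mul_apply]
    simp only [h1, hE, Matrix.of_apply, mul_ite, mul_one, mul_zero]
    simp [Finset.sum_ite_eq]
    exact h1 (u k)
  have hEQE : Eᵀ * (signlessLaplacian G) * E =
      M + Matrix.diagonal (fun j => (G.degree (u j) : ℝ) - c j) := by
    ext j k
    rw [hconj]
    simp only [signlessLaplacian, Matrix.add_apply, Matrix.diagonal_apply, hMdef,
      Matrix.of_apply, SimpleGraph.adjMatrix_apply]
    by_cases h : j = k
    · subst h; simp
    · have huv : u j ≠ u k := fun hh => h (hu hh)
      simp [h, huv]
  have h6 : y ⬝ᵥ (M *ᵥ y) ≤ xx ⬝ᵥ (signlessLaplacian G *ᵥ xx) := by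
    rw [hx, dot_mulVec_left, Matrix.mulVec_mulVec, Matrix.mulVec_mulVec, hEQE,
      Matrix.add_mulVec, dotProduct_add]
    refine le_add_of_nonneg_right ?_
    rw [dotProduct]
    refine Finset.sum_nonneg fun j _ => ?_
    rw [Matrix.mulVec_diagonal]
    have := (hc j).2
    nlinarith [sq_nonneg (y j)]
  have h7 : xx ⬝ᵥ xx = y ⬝ᵥ y := by
    rw [hx, dot_mulVec_left, Matrix.mulVec_mulVec, hEtE, Matrix.one_mulVec]
  -- existence of a nonzero coefficient outside S
  have hex : ∃ v0, cQ v0 ≠ 0 ∧ v0 ∉ S := by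
    by_contra hco
    push_neg at hco
    have hzero : xx ⬝ᵥ xx = 0 := by
      rw [hqQ.2]
      refine Finset.sum_eq_zero fun v _ => ?_
      by_cases h : cQ v = 0
      · simp [h]
      · exact absurd (hcS v (hco v h)) h
    rw [h7, hqM.2] at hzero
    exact absurd hzero hpos.ne'
  obtain ⟨v0, hv0, hv0S⟩ := hex
  have hnotS : ∀ v, v ∉ S → hQ.eigenvalues v < θ := by
    intro v hv
    by_contra hle
    push_neg at hle
    exact hv (by rw [hSdef]; exact Finset.mem_filter.mpr ⟨Finset.mem_univ _, hle⟩)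
  have hstrict : xx ⬝ᵥ (signlessLaplacian G *ᵥ xx) < θ * (xx ⬝ᵥ xx) := by
    rw [hqQ.1, hqQ.2, Finset.mul_sum]
    refine Finset.sum_lt_sum (fun v _ => ?_) ⟨v0, Finset.mem_univ _, ?_⟩
    · by_cases hvS : v ∈ S
      · simp [hcS v hvS]
      · exact mul_le_mul_of_nonneg_right (hnotS v hvS).le (sq_nonneg _)
    · refine mul_lt_mul_of_pos_right (hnotS v0 hv0S) ?_
      exact lt_of_le_of_ne (sq_nonneg _) (Ne.symm (pow_ne_zero 2 hv0))
  have hyy : y ⬝ᵥ y = ∑ j, (w j) ^ 2 := hqM.2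
  have : θ * (y ⬝ᵥ y) < θ * (y ⬝ᵥ y) := by
    calc θ * (y ⬝ᵥ y) ≤ y ⬝ᵥ (M *ᵥ y) := hstep1
    _ ≤ xx ⬝ᵥ (signlessLaplacian G *ᵥ xx) := h6
    _ < θ * (xx ⬝ᵥ xx) := hstrict
    _ = θ * (y ⬝ᵥ y) := by rw [h7]
  exact absurd this (lt_irrefl _)
end

section
/- Let G = K_1 ∨ (C_{l_1} ∪ ... ∪ C_{l_t} ∪ s K_1) with s, t ≥ 1 and n vertices. Then 5 is an eigenvalue of the signless Laplacian Q(G) with multiplicity at least t − 1. -/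
open SimpleGraph Matrix Finset
attribute [local instance] Classical.propDecidable
set_option linter.unnecessarySimpa false

section Aux

lemma cyc_deg {n : ℕ} (hn : 3 ≤ n) (a : Fin n) : (cycleGraph n).degree a = 2 := by
  obtain ⟨m, rfl⟩ : ∃ m, n = m + 3 := ⟨n - 3, by omega⟩
  exact cycleGraph_degree_three_le

variable {W : Type*} [Fintype W] [DecidableEq W]

lemma sum_ite_adj (G : SimpleGraph W) (v : W) (f : W → ℝ) :
    ∑ u ∈ G.neighborFinset v, f u = ∑ u : W, if G.Adj v u then f u else 0 := by
  classical
  rw [neighborFinset_eq_filter, Finset.sum_filter]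

lemma deg_eq_sum (G : SimpleGraph W) (v : W) :
    (G.degree v : ℝ) = ∑ u : W, if G.Adj v u then (1:ℝ) else 0 := by
  classical
  rw [SimpleGraph.degree, neighborFinset_eq_filter, Finset.card_filter]
  push_cast
  rfl

lemma slap_mulVec (G : SimpleGraph W) (x : W → ℝ) (v : W) :
    (signlessLaplacian G).mulVec x v
      = (G.degree v : ℝ) * x v + ∑ u : W, if G.Adj v u then x u else 0 := by
  classical
  rw [signlessLaplacian, Matrix.add_mulVec]
  simp only [Pi.add_apply, Matrix.mulVec_diagonal]
  rw [SimpleGraph.adjMatrix_mulVec_apply, sum_ite_adj]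

end Aux

section Main

variable (t s : ℕ) (l : Fin t → ℕ)

/-- Vertex type. -/
abbrev VT := Unit ⊕ ((Σ i : Fin t, Fin (l i)) ⊕ Fin s)

/-- The graph. -/
abbrev GG : SimpleGraph (VT t s l) :=
  joinG (⊥ : SimpleGraph Unit) (sumG (cyclesUnion t l) (⊥ : SimpleGraph (Fin s)))

/-- Vector constant on each cycle, zero on apex and isolated vertices. -/
def xc (c : Fin t → ℝ) : VT t s l → ℝ := fun v =>
  match v with
  | Sum.inl _ => 0
  | Sum.inr (Sum.inl σ) => c σ.1
  | Sum.inr (Sum.inr _) => 0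

variable {t s l}

lemma cyc_indicator_sum {n : ℕ} (hn : 3 ≤ n) (a : Fin n) :
    (∑ b : Fin n, if (cycleGraph n).Adj a b then (1:ℝ) else 0) = 2 := by
  have hfil : Finset.univ.filter ((cycleGraph n).Adj a) = (cycleGraph n).neighborFinset a := by
    ext b; simp
  rw [Finset.sum_boole, hfil]
  have : ((cycleGraph n).neighborFinset a).card = (cycleGraph n).degree a := rfl
  rw [this, cyc_deg hn a]
  norm_num

lemma sum_adj_cyc (hl : ∀ i, 3 ≤ l i) (i : Fin t) (a : Fin (l i)) (f : VT t s l → ℝ) :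
    (∑ w : VT t s l, if (GG t s l).Adj (Sum.inr (Sum.inl ⟨i, a⟩)) w then f w else 0)
      = f (Sum.inl ()) +
        ∑ b : Fin (l i), if (cycleGraph (l i)).Adj a b then f (Sum.inr (Sum.inl ⟨i, b⟩)) else 0 := by
  classical
  rw [Fintype.sum_sum_type]
  have h1 : (∑ u : Unit, if (GG t s l).Adj (Sum.inr (Sum.inl ⟨i, a⟩)) (Sum.inl u)
      then f (Sum.inl u) else 0) = f (Sum.inl ()) := by
    simp [GG, joinG]
  rw [h1, Fintype.sum_sum_type]
  have h2 : (∑ b : Fin s, if (GG t s l).Adj (Sum.inr (Sum.inl ⟨i, a⟩)) (Sum.inr (Sum.inr b))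
      then f (Sum.inr (Sum.inr b)) else 0) = 0 := by
    apply Finset.sum_eq_zero; intro b _
    have : ¬ (GG t s l).Adj (Sum.inr (Sum.inl ⟨i, a⟩)) (Sum.inr (Sum.inr b)) := by
      simp [GG, joinG, sumG]
    simp [this]
  rw [h2, add_zero]
  congr 1
  rw [← Finset.univ_sigma_univ, Finset.sum_sigma]
  rw [Finset.sum_eq_single_of_mem i (Finset.mem_univ i)]
  · apply Finset.sum_congr rfl
    intro b _
    congr 1
    show ((GG t s l).Adj _ _) = _
    simp only [eq_iff_iff]
    constructor
    · rintro ⟨h, hadj⟩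
      exact hadj
    · intro h
      exact ⟨rfl, h⟩
  · intro j _ hj
    apply Finset.sum_eq_zero
    intro b _
    have : ¬ (GG t s l).Adj (Sum.inr (Sum.inl ⟨i, a⟩)) (Sum.inr (Sum.inl ⟨j, b⟩)) := by
      rintro ⟨h, -⟩
      exact hj h.symm
    simp [this]

lemma sum_adj_apex (f : VT t s l → ℝ) (u : Unit) :
    (∑ w : VT t s l, if (GG t s l).Adj (Sum.inl u) w then f w else 0)
      = (∑ σ : Σ i : Fin t, Fin (l i), f (Sum.inr (Sum.inl σ)))
        + ∑ b : Fin s, f (Sum.inr (Sum.inr b)) := by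
  classical
  rw [Fintype.sum_sum_type]
  have h1 : (∑ u' : Unit, if (GG t s l).Adj (Sum.inl u) (Sum.inl u')
      then f (Sum.inl u') else 0) = 0 := by
    simp [GG, joinG]
  rw [h1, zero_add, Fintype.sum_sum_type]
  have ht : ∀ w : (Σ i : Fin t, Fin (l i)) ⊕ Fin s,
      (GG t s l).Adj (Sum.inl u) (Sum.inr w) := fun w => trivial
  simp only [if_pos (ht _)]

lemma sum_adj_isol (f : VT t s l → ℝ) (b : Fin s) :
    (∑ w : VT t s l, if (GG t s l).Adj (Sum.inr (Sum.inr b)) w then f w else 0)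
      = f (Sum.inl ()) := by
  classical
  rw [Fintype.sum_sum_type]
  have h1 : (∑ u : Unit, if (GG t s l).Adj (Sum.inr (Sum.inr b)) (Sum.inl u)
      then f (Sum.inl u) else 0) = f (Sum.inl ()) := by simp [GG, joinG]
  rw [h1]
  have h2 : (∑ w : (Σ i : Fin t, Fin (l i)) ⊕ Fin s,
      if (GG t s l).Adj (Sum.inr (Sum.inr b)) (Sum.inr w) then f (Sum.inr w) else 0) = 0 := by
    apply Finset.sum_eq_zero; intro w _
    have : ¬ (GG t s l).Adj (Sum.inr (Sum.inr b)) (Sum.inr w) := by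
      cases w <;> simp [GG, joinG, sumG]
    simp [this]
  rw [h2, add_zero]

lemma deg_cyc (hl : ∀ i, 3 ≤ l i) (i : Fin t) (a : Fin (l i)) :
    ((GG t s l).degree (Sum.inr (Sum.inl ⟨i, a⟩)) : ℝ) = 3 := by
  classical
  rw [deg_eq_sum, sum_adj_cyc hl]
  rw [cyc_indicator_sum (hl i) a]
  norm_num

lemma xc_mem_eigen (hl : ∀ i, 3 ≤ l i) (c : Fin t → ℝ)
    (hc : ∑ i, (l i : ℝ) * c i = 0) :
    xc t s l c ∈ Module.End.eigenspace
      (Matrix.toLin' (signlessLaplacian (GG t s l))) 5 := by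
  classical
  rw [Module.End.mem_eigenspace_iff]
  rw [Matrix.toLin'_apply]
  funext v
  rw [slap_mulVec]
  cases v with
  | inl u =>
    rw [sum_adj_apex]
    have h1 : (∑ σ : Σ i : Fin t, Fin (l i), xc t s l c (Sum.inr (Sum.inl σ))) = 0 := by
      rw [← Finset.univ_sigma_univ, Finset.sum_sigma]
      have : ∀ i : Fin t, (∑ b : Fin (l i), xc t s l c (Sum.inr (Sum.inl ⟨i, b⟩)))
          = (l i : ℝ) * c i := by
        intro i
        simp [xc, Finset.sum_const, mul_comm]
      calc (∑ i : Fin t, ∑ b : Fin (l i), xc t s l c (Sum.inr (Sum.inl ⟨i, b⟩)))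
          = ∑ i : Fin t, (l i : ℝ) * c i := Finset.sum_congr rfl (fun i _ => this i)
        _ = 0 := hc
    have h2 : (∑ b : Fin s, xc t s l c (Sum.inr (Sum.inr b))) = 0 :=
      Finset.sum_eq_zero (fun b _ => rfl)
    rw [h1, h2]
    show ((GG t s l).degree _ : ℝ) * 0 + (0 + 0) = (5:ℝ) • (0:ℝ)
    simp
  | inr w =>
    cases w with
    | inl σ =>
      obtain ⟨i, a⟩ := σ
      rw [sum_adj_cyc hl, deg_cyc hl]
      have h2 : (∑ b : Fin (l i), if (cycleGraph (l i)).Adj a b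
          then xc t s l c (Sum.inr (Sum.inl ⟨i, b⟩)) else 0) = 2 * c i := by
        have : ∀ b : Fin (l i), (if (cycleGraph (l i)).Adj a b
            then xc t s l c (Sum.inr (Sum.inl ⟨i, b⟩)) else 0)
            = (if (cycleGraph (l i)).Adj a b then (1:ℝ) else 0) * c i := by
          intro b
          by_cases h : (cycleGraph (l i)).Adj a b <;> simp [h, xc]
        rw [Finset.sum_congr rfl (fun b _ => this b), ← Finset.sum_mul,
          cyc_indicator_sum (hl i) a]
      rw [h2]
      show (3:ℝ) * c i + (0 + 2 * c i) = 5 * c i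
      ring
    | inr b =>
      rw [sum_adj_isol]
      show ((GG t s l).degree _ : ℝ) * 0 + 0 = 5 * 0
      ring

end Main

theorem mult_five_ge (t s : ℕ) (ht : 1 ≤ t) (hs : 1 ≤ s)
    (l : Fin t → ℕ) (hl : ∀ i, 3 ≤ l i) :
    t - 1 ≤ Module.finrank ℝ
      ↥(Module.End.eigenspace (Matrix.toLin' (signlessLaplacian
        (joinG (⊥ : SimpleGraph Unit)
          (sumG (cyclesUnion t l) (⊥ : SimpleGraph (Fin s)))))) 5) := by
  classical
  set E := Module.End.eigenspace (Matrix.toLin' (signlessLaplacian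
        (joinG (⊥ : SimpleGraph Unit)
          (sumG (cyclesUnion t l) (⊥ : SimpleGraph (Fin s)))))) 5 with hE
  set z0 : Fin t := ⟨0, ht⟩ with hz0
  set e : Fin (t-1) → Fin t := fun k => ⟨k.1 + 1, by omega⟩ with he
  have he_ne : ∀ k, e k ≠ z0 := by
    intro k h
    simpa [he, hz0, Fin.ext_iff] using h
  have he_inj : Function.Injective e := by
    intro k k' h
    simpa [he, Fin.ext_iff] using h
  set cc : Fin (t-1) → Fin t → ℝ := fun k j =>
    if j = z0 then (l (e k) : ℝ) else if j = e k then -(l z0 : ℝ) else 0 with hcc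
  set vv : Fin (t-1) → (VT t s l → ℝ) := fun k => xc t s l (cc k) with hvv
  have hmem : ∀ k, vv k ∈ E := by
    intro k
    apply xc_mem_eigen hl
    have hsum : ∀ j : Fin t, (l j : ℝ) * cc k j
        = (if j = z0 then ((l z0 : ℝ) * (l (e k) : ℝ)) else 0)
          + (if j = e k then -((l (e k) : ℝ) * (l z0 : ℝ)) else 0) := by
      intro j
      by_cases h1 : j = z0
      · subst h1
        simp [hcc, Ne.symm (he_ne k)]
      · by_cases h2 : j = e k
        · subst h2
          simp [hcc, h1]
        · simp [hcc, h1, h2]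
    rw [Finset.sum_congr rfl (fun j _ => hsum j), Finset.sum_add_distrib]
    simp only [Finset.sum_ite_eq', Finset.mem_univ, if_true]
    ring
  have hli : LinearIndependent ℝ vv := by
    rw [Fintype.linearIndependent_iff]
    intro g hg k
    have hk := congrFun hg (Sum.inr (Sum.inl ⟨e k, ⟨0, by have := hl (e k); omega⟩⟩))
    simp only [Finset.sum_apply, Pi.smul_apply, smul_eq_mul, Pi.zero_apply] at hk
    have hval : ∀ k' : Fin (t-1),
        vv k' (Sum.inr (Sum.inl ⟨e k, ⟨0, by have := hl (e k); omega⟩⟩))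
          = if k' = k then -(l z0 : ℝ) else 0 := by
      intro k'
      show cc k' (e k) = _
      by_cases h : k' = k
      · subst h
        simp [hcc, he_ne k']
      · have : e k ≠ e k' := fun hh => h (he_inj hh.symm)
        simp [hcc, he_ne k, this, h]
    rw [Finset.sum_congr rfl (fun k' _ => by rw [hval k'])] at hk
    simp only [mul_ite, mul_zero, Finset.sum_ite_eq', Finset.mem_univ, if_true] at hk
    have hlz : (l z0 : ℝ) ≠ 0 := by
      have := hl z0; positivity
    have : g k * -(l z0 : ℝ) = 0 := hk
    rcases mul_eq_zero.mp this with h | h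
    · exact h
    · exact absurd h (by simpa using hlz)
  have hspan : Submodule.span ℝ (Set.range vv) ≤ E := by
    rw [Submodule.span_le]
    rintro _ ⟨k, rfl⟩
    exact hmem k
  calc t - 1 = Fintype.card (Fin (t-1)) := by simp
    _ = Module.finrank ℝ ↥(Submodule.span ℝ (Set.range vv)) := (finrank_span_eq_card hli).symm
    _ ≤ Module.finrank ℝ ↥E := Submodule.finrank_mono hspan
end

section
/- Let G = K_1 ∨ (C_{l_1} ∪ ... ∪ C_{l_t} ∪ s K_1) with s, t ≥ 1 and n vertices, and let r be a root of x^3 − (n+5)x^2 + 5nx − 4(n−s−1) with r ∉ {1, 5}. Then the vector taking value 1/(r−1) on each of the s isolated-part vertices, 1/(r−5) on each cycle vertex, and 1 on the join vertex is an eigenvector of Q(G) for the eigenvalue r. -/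
open SimpleGraph Matrix Finset
attribute [local instance] Classical.propDecidable
set_option linter.unnecessarySimpa false

lemma Q_apply {V : Type*} [Fintype V] (G : SimpleGraph V) (f : V → ℝ) (v : V) :
    (signlessLaplacian G).mulVec f v
      = (G.degree v : ℝ) * f v + ∑ u, if G.Adj v u then f u else 0 := by
  classical
  rw [signlessLaplacian, Matrix.add_mulVec]
  simp only [Pi.add_apply, Matrix.mulVec_diagonal]
  congr 1
  rw [Matrix.mulVec, dotProduct]
  simp [SimpleGraph.adjMatrix_apply, ite_mul, mul_comm]

lemma deg_as_sum {V : Type*} [Fintype V] (G : SimpleGraph V) (v : V) :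
    (G.degree v : ℝ) = ∑ u, if G.Adj v u then (1:ℝ) else 0 := by
  classical
  rw [SimpleGraph.degree, SimpleGraph.neighborFinset_eq_filter, Finset.card_filter]
  push_cast
  rfl

lemma cyc_deg_sum {m : ℕ} (hm : 3 ≤ m) (a : Fin m) (c : ℝ) :
    ∑ b, (if (cycleGraph m).Adj a b then c else 0) = 2 * c := by
  classical
  have hdeg : (cycleGraph m).degree a = 2 := by
    match m, hm with
    | (k+3), _ => exact SimpleGraph.cycleGraph_degree_three_le
  rw [Finset.sum_ite, Finset.sum_const_zero, add_zero, Finset.sum_const,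
    ← SimpleGraph.neighborFinset_eq_filter]
  rw [show ((cycleGraph m).neighborFinset a).card = 2 from hdeg]
  simp [two_smul]; ring

lemma cyc_union_sum (t s : ℕ) (l : Fin t → ℕ) (hl : ∀ i, 3 ≤ l i) (i : Fin t) (a : Fin (l i)) (c : ℝ) :
    ∑ u : (Σ j : Fin t, Fin (l j)), (if (cyclesUnion t l).Adj ⟨i,a⟩ u then c else 0) = 2 * c := by
  classical
  rw [← Finset.univ_sigma_univ, Finset.sum_sigma]
  rw [Finset.sum_eq_single i]
  · rw [← cyc_deg_sum (hl i) a c]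
    apply Finset.sum_congr rfl
    intro b _
    congr 1
    simp [cyclesUnion]
  · intro j _ hj
    apply Finset.sum_eq_zero
    intro b _
    rw [if_neg]
    rintro ⟨h, -⟩
    exact hj h.symm
  · simp

theorem root_eigenvector (t s n : ℕ) (ht : 1 ≤ t) (hs : 1 ≤ s)
    (l : Fin t → ℕ) (hl : ∀ i, 3 ≤ l i) (hn : n = 1 + (∑ i, l i) + s)
    (r : ℝ) (hr1 : r ≠ 1) (hr5 : r ≠ 5)
    (hroot : r ^ 3 - (n + 5) * r ^ 2 + 5 * n * r - 4 * ((n : ℝ) - s - 1) = 0) :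
    (signlessLaplacian (joinG (⊥ : SimpleGraph Unit)
        (sumG (cyclesUnion t l) (⊥ : SimpleGraph (Fin s))))).mulVec
      (Sum.elim (fun _ => 1)
        (Sum.elim (fun _ => 1 / (r - 5)) (fun _ => 1 / (r - 1)))) =
    r • (Sum.elim (fun _ => (1 : ℝ))
        (Sum.elim (fun _ => 1 / (r - 5)) (fun _ => 1 / (r - 1)))) := by
  classical
  have h1 : r - 1 ≠ 0 := sub_ne_zero.mpr hr1
  have h5 : r - 5 ≠ 0 := sub_ne_zero.mpr hr5
  set G := joinG (⊥ : SimpleGraph Unit)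
      (sumG (cyclesUnion t l) (⊥ : SimpleGraph (Fin s))) with hG
  set f : (Unit ⊕ ((Σ i : Fin t, Fin (l i)) ⊕ Fin s)) → ℝ :=
    Sum.elim (fun _ => 1)
      (Sum.elim (fun _ => 1 / (r - 5)) (fun _ => 1 / (r - 1))) with hf
  funext v
  rw [Pi.smul_apply, smul_eq_mul, Q_apply, deg_as_sum]
  rcases v with ⟨⟩ | (⟨i, a⟩ | b)
  · -- join vertex
    simp only [Fintype.sum_sum_type, hG, hf, joinG, sumG, Sum.elim_inl, Sum.elim_inr,
      SimpleGraph.bot_adj, if_false, if_true, Finset.sum_const, Finset.sum_const_zero,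
      zero_add, nsmul_eq_mul, Finset.card_univ, Fintype.card_sigma, Fintype.card_fin,
      Fintype.card_unit, mul_zero, mul_one, zero_add]
    simp only [Fintype.card_sum, Fintype.card_sigma, Fintype.card_fin]
    push_cast
    subst hn
    push_cast at hroot
    field_simp
    linear_combination -hroot
  · -- cycle vertex
    simp only [Fintype.sum_sum_type, hG, hf, joinG, sumG, Sum.elim_inl, Sum.elim_inr,
      SimpleGraph.bot_adj, if_false, if_true, Finset.sum_const, Finset.sum_const_zero,
      zero_add, add_zero, nsmul_eq_mul, Finset.card_univ, Fintype.card_unit,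
      mul_zero, mul_one]
    rw [cyc_union_sum t s l hl i a 1, cyc_union_sum t s l hl i a (1/(r-5))]
    field_simp
    ring
  · -- isolated vertex
    simp only [Fintype.sum_sum_type, hG, hf, joinG, sumG, Sum.elim_inl, Sum.elim_inr,
      SimpleGraph.bot_adj, if_false, if_true, Finset.sum_const, Finset.sum_const_zero,
      zero_add, add_zero, nsmul_eq_mul, Finset.card_univ, Fintype.card_unit,
      mul_zero, mul_one]
    field_simp
    push_cast
    ring
end

section
/- Let H = K_1 ∨ (K_{1,3} ∪ (s−1) K_1) with s ≥ 1 and order n = s + 4. Then the signless Laplacian spectrum of H is {1 with multiplicity s−1, 2 with multiplicity 2, r_1, r_2, r_3}, where r_1, r_2, r_3 are the roots of x^3 − (n+5)x^2 + 5nx − 4(n−s−1). -/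
open SimpleGraph Matrix Finset
attribute [local instance] Classical.propDecidable
set_option linter.unnecessarySimpa false

section Aux
open Polynomial

lemma eval_charpoly' {n : Type*} [Fintype n] [DecidableEq n] (M : Matrix n n ℝ) (x : ℝ) :
    (M.charpoly).eval x = ((x • (1 : Matrix n n ℝ)) - M).det := by
  rw [Matrix.charpoly, ← Polynomial.coe_evalRingHom, RingHom.map_det]
  congr 1
  ext i j
  by_cases h : i = j
  · subst h
    simp [Matrix.charmatrix_apply_eq, Matrix.one_apply]
  · simp [Matrix.charmatrix_apply_ne _ _ _ h, Matrix.one_apply, h]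

lemma eval_charpoly_herm {n : Type*} [Fintype n] [DecidableEq n] {M : Matrix n n ℝ}
    (hM : M.IsHermitian) (x : ℝ) :
    (M.charpoly).eval x = ∏ i, (x - hM.eigenvalues i) := by
  rw [eval_charpoly']
  have hU : (hM.eigenvectorUnitary : Matrix n n ℝ) * star (hM.eigenvectorUnitary : Matrix n n ℝ) = 1 :=
    (Matrix.mem_unitaryGroup_iff).mp hM.eigenvectorUnitary.2
  have hU' : star (hM.eigenvectorUnitary : Matrix n n ℝ) * (hM.eigenvectorUnitary : Matrix n n ℝ) = 1 :=
    (Matrix.mem_unitaryGroup_iff').mp hM.eigenvectorUnitary.2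
  have key : (x • (1 : Matrix n n ℝ)) - M =
      (hM.eigenvectorUnitary : Matrix n n ℝ) *
        ((x • (1 : Matrix n n ℝ)) - Matrix.diagonal (RCLike.ofReal ∘ hM.eigenvalues)) *
        star (hM.eigenvectorUnitary : Matrix n n ℝ) := by
    rw [Matrix.mul_sub, Matrix.sub_mul]
    congr 1
    · rw [Matrix.mul_smul, Matrix.mul_one, Matrix.smul_mul, hU]
    · exact hM.spectral_theorem
  rw [key, Matrix.det_mul, Matrix.det_mul, mul_comm, ← mul_assoc, ← Matrix.det_mul, hU']
  have : (x • (1 : Matrix n n ℝ)) - Matrix.diagonal (RCLike.ofReal ∘ hM.eigenvalues) =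
      Matrix.diagonal (fun i => x - hM.eigenvalues i) := by
    ext i j
    by_cases h : i = j <;> simp [h, Matrix.one_apply, Matrix.diagonal]
  rw [this, Matrix.det_diagonal, Matrix.det_one, one_mul]

abbrev Vt (t : ℕ) := Unit ⊕ ((Unit ⊕ Fin 3) ⊕ Fin t)
abbrev W5 := Unit ⊕ (Unit ⊕ Fin 3)

def Gt (t : ℕ) : SimpleGraph (Vt t) :=
  joinG (⊥ : SimpleGraph Unit)
    (sumG (completeBipartiteGraph Unit (Fin 3)) (⊥ : SimpleGraph (Fin t)))

lemma adj_simp (t : ℕ) (x y : Vt t) :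
    (Gt t).Adj x y =
      match x, y with
      | .inl _, .inl _ => False
      | .inl _, .inr _ => True
      | .inr _, .inl _ => True
      | .inr (.inl (.inl _)), .inr (.inl (.inl _)) => False
      | .inr (.inl (.inl _)), .inr (.inl (.inr _)) => True
      | .inr (.inl (.inr _)), .inr (.inl (.inl _)) => True
      | .inr (.inl (.inr _)), .inr (.inl (.inr _)) => False
      | .inr (.inr _), .inr (.inr _) => False
      | .inr (.inl _), .inr (.inr _) => False
      | .inr (.inr _), .inr (.inl _) => False := by
  rcases x with _ | ((_ | i) | i) <;> rcases y with _ | ((_ | j) | j) <;>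
    simp [Gt, joinG, sumG, completeBipartiteGraph]

lemma deg_eq (t : ℕ) (v : Vt t) :
    ((Gt t).degree v : ℝ) = ∑ w : Vt t, if (Gt t).Adj v w then (1:ℝ) else 0 := by
  rw [SimpleGraph.degree, SimpleGraph.neighborFinset_eq_filter, Finset.card_filter]
  push_cast
  exact Finset.sum_congr rfl fun w _ => by split_ifs <;> simp

lemma deg_v0 (t : ℕ) (u : Unit) : (((Gt t).degree (Sum.inl u) : ℝ)) = t + 4 := by
  rw [deg_eq]
  simp [Fintype.sum_sum_type, adj_simp, -Finset.sum_boole]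
  ring

lemma deg_c (t : ℕ) (u : Unit) : (((Gt t).degree (Sum.inr (Sum.inl (Sum.inl u))) : ℝ)) = 4 := by
  rw [deg_eq]
  simp [Fintype.sum_sum_type, adj_simp, -Finset.sum_boole]
  norm_num

lemma deg_leaf (t : ℕ) (i : Fin 3) :
    (((Gt t).degree (Sum.inr (Sum.inl (Sum.inr i))) : ℝ)) = 2 := by
  rw [deg_eq]
  simp [Fintype.sum_sum_type, adj_simp, -Finset.sum_boole]
  norm_num

lemma deg_iso (t : ℕ) (j : Fin t) :
    (((Gt t).degree (Sum.inr (Sum.inr j)) : ℝ)) = 1 := by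
  rw [deg_eq]
  simp [Fintype.sum_sum_type, adj_simp, -Finset.sum_boole]

def A5 (t : ℕ) (x : ℝ) : Matrix W5 W5 ℝ := fun i j =>
  match i, j with
  | .inl _, .inl _ => x - (t + 4)
  | .inl _, .inr _ => -1
  | .inr _, .inl _ => -1
  | .inr (.inl _), .inr (.inl _) => x - 4
  | .inr (.inl _), .inr (.inr _) => -1
  | .inr (.inr _), .inr (.inl _) => -1
  | .inr (.inr a), .inr (.inr b) => if a = b then x - 2 else 0

def Bm (t : ℕ) : Matrix W5 (Fin t) ℝ := fun i _ =>
  match i with | .inl _ => -1 | .inr _ => 0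

def Cm (t : ℕ) : Matrix (Fin t) W5 ℝ := fun _ j =>
  match j with | .inl _ => -1 | .inr _ => 0

lemma matrix_eq (t : ℕ) (x : ℝ) :
    x • (1 : Matrix (Vt t) (Vt t) ℝ) - signlessLaplacian (Gt t) =
      (Matrix.fromBlocks (A5 t x) (Bm t) (Cm t) ((x - 1) • 1)).submatrix
        (Equiv.sumAssoc Unit (Unit ⊕ Fin 3) (Fin t)).symm
        (Equiv.sumAssoc Unit (Unit ⊕ Fin 3) (Fin t)).symm := by
  ext i j
  rcases i with _ | ((_ | i) | i) <;> rcases j with _ | ((_ | j) | j) <;>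
    simp [signlessLaplacian, Matrix.one_apply, Matrix.diagonal, SimpleGraph.adjMatrix_apply,
      adj_simp, deg_v0, deg_c, deg_leaf, deg_iso, A5, Bm, Cm, Equiv.sumAssoc,
      Matrix.fromBlocks] <;>
    (try split_ifs <;> simp_all) <;> (try ring)

def eW : W5 ≃ Fin 5 where
  toFun x := match x with
    | .inl _ => 0
    | .inr (.inl _) => 1
    | .inr (.inr i) => i.succ.succ
  invFun := ![Sum.inl (), Sum.inr (Sum.inl ()), Sum.inr (Sum.inr 0), Sum.inr (Sum.inr 1),
    Sum.inr (Sum.inr 2)]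
  left_inv := by rintro (⟨⟩ | ⟨⟩ | i) <;> first | rfl | (fin_cases i <;> rfl)
  right_inv := by intro j; fin_cases j <;> rfl

noncomputable def N5 (t : ℕ) (x : ℝ) : Matrix (Fin 5) (Fin 5) ℝ :=
  !![x - (t+4) - t*(x-1)⁻¹, -1, -1, -1, -1;
     -1, x-4, -1, -1, -1;
     -1, -1, x-2, 0, 0;
     -1, -1, 0, x-2, 0;
     -1, -1, 0, 0, x-2]

@[simp] lemma fv1 : Fin.castSucc (2 : Fin 4) = (2 : Fin 5) := rfl
@[simp] lemma fv2 : (Fin.succ (2 : Fin 3)).castSucc = (3 : Fin 5) := rfl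
@[simp] lemma fv3 : Fin.castSucc (2 : Fin 3) = (2 : Fin 4) := rfl
@[simp] lemma fv4 : Fin.succ (2 : Fin 3) = (3 : Fin 4) := rfl
@[simp] lemma fv5 : Fin.succ (2 : Fin 4) = (3 : Fin 5) := rfl
@[simp] lemma fv6 : Fin.castSucc (3 : Fin 4) = (3 : Fin 5) := rfl
@[simp] lemma fv7 : Fin.succ (3 : Fin 4) = (4 : Fin 5) := rfl
@[simp] lemma fv8 : Fin.castSucc (1 : Fin 4) = (1 : Fin 5) := rfl
@[simp] lemma fv9 : Fin.castSucc (1 : Fin 3) = (1 : Fin 4) := rfl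

set_option maxHeartbeats 1600000 in
lemma detN5 (t : ℕ) (x : ℝ) (hx : x ≠ 1) :
    (N5 t x).det = (x-2)^2 * (x^3 - (t+10)*x^2 + (5*t+25)*x - 12) := by
  have hx' : x - 1 ≠ 0 := sub_ne_zero.mpr hx
  simp (config := { decide := true }) [N5, Matrix.det_succ_row_zero, Fin.sum_univ_succ,
    Fin.succAbove, Matrix.vecHead, Matrix.vecTail, Matrix.cons_val_zero,
    Matrix.cons_val_one, Matrix.cons_val_two, Matrix.cons_val_three, Matrix.cons_val_four]
  field_simp
  ring

set_option maxHeartbeats 1600000 in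
lemma det_key (t : ℕ) (x : ℝ) (hx : x ≠ 1) :
    (x • (1 : Matrix (Vt t) (Vt t) ℝ) - signlessLaplacian (Gt t)).det =
      (x-1)^t * ((x-2)^2 * (x^3 - (t+10)*x^2 + (5*t+25)*x - 12)) := by
  have hx' : x - 1 ≠ 0 := sub_ne_zero.mpr hx
  rw [matrix_eq, Matrix.det_submatrix_equiv_self]
  letI : Invertible ((x - 1) • (1 : Matrix (Fin t) (Fin t) ℝ)) :=
    ⟨(x - 1)⁻¹ • 1,
      by rw [Matrix.smul_mul, Matrix.mul_smul, smul_smul, inv_mul_cancel₀ hx', one_smul,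
        Matrix.one_mul],
      by rw [Matrix.smul_mul, Matrix.mul_smul, smul_smul, mul_inv_cancel₀ hx', one_smul,
        Matrix.one_mul]⟩
  rw [Matrix.det_fromBlocks₂₂]
  have h1 : ((x - 1) • (1 : Matrix (Fin t) (Fin t) ℝ)).det = (x - 1) ^ t := by
    rw [Matrix.det_smul, Matrix.det_one, mul_one]; simp
  have hinv : ⅟((x - 1) • (1 : Matrix (Fin t) (Fin t) ℝ)) = (x - 1)⁻¹ • 1 := rfl
  have h2 : (A5 t x - Bm t * ⅟((x - 1) • (1 : Matrix (Fin t) (Fin t) ℝ)) * Cm t).submatrix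
      eW.symm eW.symm = N5 t x := by
    rw [hinv]
    ext i j
    fin_cases i <;> fin_cases j <;>
      simp (config := { decide := true }) [A5, Bm, Cm, N5, eW, Matrix.mul_apply,
        Matrix.one_apply, Matrix.submatrix_apply, Matrix.vecHead, Matrix.vecTail,
        Finset.sum_ite_eq', mul_ite, Finset.sum_const, Fintype.card_fin, nsmul_eq_mul] <;>
      (try ring)
  rw [← Matrix.det_submatrix_equiv_self eW.symm, h2, h1, detN5 t x hx]

end Aux

theorem spectrum_of_join_star (s n : ℕ) (hs : 1 ≤ s) (hn : n = s + 4)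
    (r1 r2 r3 : ℝ)
    (hroots : ∀ x : ℝ, x ^ 3 - (n + 5) * x ^ 2 + 5 * n * x - 4 * ((n : ℝ) - s - 1) =
      (x - r1) * (x - r2) * (x - r3))
    (hQ : (signlessLaplacian (joinG (⊥ : SimpleGraph Unit)
      (sumG (completeBipartiteGraph Unit (Fin 3))
        (⊥ : SimpleGraph (Fin (s - 1)))))).IsHermitian) :
    eigMultiset hQ =
      Multiset.replicate (s - 1) 1 + {2, 2} + {r1, r2, r3} := by
  have hc : ((s - 1 : ℕ) : ℝ) = (s : ℝ) - 1 := by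
    have := hs; push_cast [Nat.cast_sub this]; ring
  have key : (((eigMultiset hQ).map fun a => Polynomial.X - Polynomial.C a).prod) =
      (((Multiset.replicate (s - 1) (1:ℝ) + {2, 2} + {r1, r2, r3}).map
        fun a => Polynomial.X - Polynomial.C a).prod) := by
    apply Polynomial.eq_of_infinite_eval_eq
    apply ((Set.finite_singleton (1:ℝ)).infinite_compl).mono
    intro x hx
    have hx1 : x ≠ 1 := by simpa using hx
    have e1 : Polynomial.eval x (((eigMultiset hQ).map
        fun a => Polynomial.X - Polynomial.C a).prod) = ∏ i, (x - hQ.eigenvalues i) := by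
      rw [Polynomial.eval_multiset_prod, Multiset.map_map, eigMultiset, Multiset.map_map,
        Finset.prod_eq_multiset_prod]
      simp [Function.comp]
    have e2 : Polynomial.eval x (((Multiset.replicate (s - 1) (1:ℝ) + {2, 2} + {r1, r2, r3}).map
        fun a => Polynomial.X - Polynomial.C a).prod) =
        (x - 1)^(s-1) * (((x-2) * (x-2)) * ((x - r1) * ((x - r2) * (x - r3)))) := by
      rw [Polynomial.eval_multiset_prod, Multiset.map_map]
      simp [Multiset.map_replicate, mul_assoc]
      ring
    have e3 : (∏ i, (x - hQ.eigenvalues i)) =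
        (x-1)^(s-1) * ((x-2)^2 * (x^3 - ((s-1:ℕ)+10)*x^2 + (5*(s-1:ℕ)+25)*x - 12)) := by
      rw [← eval_charpoly_herm hQ x, eval_charpoly']
      exact det_key (s-1) x hx1
    show Polynomial.eval x _ = Polynomial.eval x _
    rw [e1, e2, e3, hc]
    have hr := hroots x
    subst hn
    push_cast at hr
    linear_combination ((x-1)^(s-1) * (x-2)^2) * hr
  have h := congrArg Polynomial.roots key
  rwa [Polynomial.roots_multiset_prod_X_sub_C, Polynomial.roots_multiset_prod_X_sub_C] at h
end

section
/- The graphs K_1 ∨ (C_3 ∪ s K_1) and K_1 ∨ (K_{1,3} ∪ (s−1) K_1), for any s ≥ 1, are non-isomorphic graphs on n = s + 4 vertices with equal signless Laplacian characteristic polynomials. -/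
open SimpleGraph Matrix Finset
attribute [local instance] Classical.propDecidable
set_option linter.unnecessarySimpa false

/-! ### Auxiliary material -/

open Polynomial

section Aux

set_option linter.unusedTactic false
set_option linter.unnecessarySeqFocus false

/-- Abbreviation for the first graph. -/
abbrev Gr1 (s : ℕ) := joinG (⊥ : SimpleGraph Unit)
  (sumG (cycleGraph 3) (⊥ : SimpleGraph (Fin s)))

/-- Abbreviation for the second graph. -/
abbrev Gr2 (s : ℕ) := joinG (⊥ : SimpleGraph Unit)
  (sumG (completeBipartiteGraph Unit (Fin 3)) (⊥ : SimpleGraph (Fin (s - 1))))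

lemma degG {V : Type*} [Fintype V] (G : SimpleGraph V) (v : V) :
    G.degree v = ∑ w, if G.Adj v w then 1 else 0 := by
  classical
  rw [SimpleGraph.degree, neighborFinset_eq_filter, Finset.card_filter]

variable (s : ℕ)

lemma deg1_u : (Gr1 s).degree (Sum.inl ()) = 3 + s := by
  rw [degG, Fintype.sum_sum_type, Fintype.sum_sum_type]; simp [joinG, sumG]

lemma deg1_t (a : Fin 3) : (Gr1 s).degree (Sum.inr (Sum.inl a)) = 3 := by
  rw [degG, Fintype.sum_sum_type, Fintype.sum_sum_type]
  simp [joinG, sumG, cycleGraph_three_eq_top]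
  fin_cases a <;> decide

lemma deg1_p (i : Fin s) : (Gr1 s).degree (Sum.inr (Sum.inr i)) = 1 := by
  rw [degG, Fintype.sum_sum_type, Fintype.sum_sum_type]; simp [joinG, sumG]

lemma deg2_u : (Gr2 s).degree (Sum.inl ()) = 4 + (s-1) := by
  rw [degG, Fintype.sum_sum_type, Fintype.sum_sum_type, Fintype.sum_sum_type]
  simp [joinG, sumG]

lemma deg2_c : (Gr2 s).degree (Sum.inr (Sum.inl (Sum.inl ()))) = 4 := by
  rw [degG, Fintype.sum_sum_type, Fintype.sum_sum_type, Fintype.sum_sum_type]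
  simp [joinG, sumG]

lemma deg2_l (a : Fin 3) : (Gr2 s).degree (Sum.inr (Sum.inl (Sum.inr a))) = 2 := by
  rw [degG, Fintype.sum_sum_type, Fintype.sum_sum_type, Fintype.sum_sum_type]
  simp [joinG, sumG]

lemma deg2_p (i : Fin (s-1)) : (Gr2 s).degree (Sum.inr (Sum.inr i)) = 1 := by
  rw [degG, Fintype.sum_sum_type, Fintype.sum_sum_type, Fintype.sum_sum_type]
  simp [joinG, sumG]

/-! #### Adjacency lemmas -/

lemma a1_uv (w : Fin 3 ⊕ Fin s) : (Gr1 s).Adj (Sum.inl ()) (Sum.inr w) := trivial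
lemma a1_vu (w : Fin 3 ⊕ Fin s) : (Gr1 s).Adj (Sum.inr w) (Sum.inl ()) := trivial
lemma a1_tt (a b : Fin 3) :
    (Gr1 s).Adj (Sum.inr (Sum.inl a)) (Sum.inr (Sum.inl b)) ↔ a ≠ b := by
  show (cycleGraph 3).Adj a b ↔ a ≠ b
  rw [cycleGraph_three_eq_top]; rfl
lemma a1_tp (a : Fin 3) (i : Fin s) :
    ¬ (Gr1 s).Adj (Sum.inr (Sum.inl a)) (Sum.inr (Sum.inr i)) := fun h => h
lemma a1_pt (a : Fin 3) (i : Fin s) :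
    ¬ (Gr1 s).Adj (Sum.inr (Sum.inr i)) (Sum.inr (Sum.inl a)) := fun h => h
lemma a1_pp (i j : Fin s) :
    ¬ (Gr1 s).Adj (Sum.inr (Sum.inr i)) (Sum.inr (Sum.inr j)) := fun h => h

lemma a2_uv (w : (Unit ⊕ Fin 3) ⊕ Fin (s-1)) : (Gr2 s).Adj (Sum.inl ()) (Sum.inr w) := trivial
lemma a2_vu (w : (Unit ⊕ Fin 3) ⊕ Fin (s-1)) : (Gr2 s).Adj (Sum.inr w) (Sum.inl ()) := trivial
lemma a2_cl (b : Fin 3) :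
    (Gr2 s).Adj (Sum.inr (Sum.inl (Sum.inl ()))) (Sum.inr (Sum.inl (Sum.inr b))) := by
  show (completeBipartiteGraph Unit (Fin 3)).Adj (Sum.inl ()) (Sum.inr b); simp
lemma a2_lc (b : Fin 3) :
    (Gr2 s).Adj (Sum.inr (Sum.inl (Sum.inr b))) (Sum.inr (Sum.inl (Sum.inl ()))) := by
  show (completeBipartiteGraph Unit (Fin 3)).Adj (Sum.inr b) (Sum.inl ()); simp
lemma a2_ll (a b : Fin 3) :
    ¬ (Gr2 s).Adj (Sum.inr (Sum.inl (Sum.inr a))) (Sum.inr (Sum.inl (Sum.inr b))) := by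
  show ¬ (completeBipartiteGraph Unit (Fin 3)).Adj (Sum.inr a) (Sum.inr b); simp
lemma a2_yp (y : Unit ⊕ Fin 3) (i : Fin (s-1)) :
    ¬ (Gr2 s).Adj (Sum.inr (Sum.inl y)) (Sum.inr (Sum.inr i)) := fun h => h
lemma a2_py (y : Unit ⊕ Fin 3) (i : Fin (s-1)) :
    ¬ (Gr2 s).Adj (Sum.inr (Sum.inr i)) (Sum.inr (Sum.inl y)) := fun h => h
lemma a2_pp (i j : Fin (s-1)) :
    ¬ (Gr2 s).Adj (Sum.inr (Sum.inr i)) (Sum.inr (Sum.inr j)) := fun h => h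

/-! #### Equivalences -/

def e1 (s : ℕ) : (Fin 4 ⊕ Fin s) ≃ (Unit ⊕ (Fin 3 ⊕ Fin s)) where
  toFun := Sum.elim
    (fun i => if h0 : i.val = 0 then Sum.inl ()
      else Sum.inr (Sum.inl ⟨i.val - 1, by have := i.isLt; omega⟩))
    (fun i => Sum.inr (Sum.inr i))
  invFun := fun v => match v with
    | .inl _ => .inl 0
    | .inr (.inl a) => .inl a.succ
    | .inr (.inr i) => .inr i
  left_inv := by
    rintro (i | i)
    · fin_cases i <;> rfl
    · rfl
  right_inv := by
    rintro (⟨⟩ | (a | i))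
    · rfl
    · fin_cases a <;> rfl
    · rfl

def e2 (s : ℕ) : (Fin 5 ⊕ Fin (s-1)) ≃ (Unit ⊕ ((Unit ⊕ Fin 3) ⊕ Fin (s-1))) where
  toFun := Sum.elim
    (fun i => if h0 : i.val = 0 then Sum.inl ()
      else if h1 : i.val = 1 then Sum.inr (Sum.inl (Sum.inl ()))
      else Sum.inr (Sum.inl (Sum.inr ⟨i.val - 2, by have := i.isLt; omega⟩)))
    (fun i => Sum.inr (Sum.inr i))
  invFun := fun v => match v with
    | .inl _ => .inl 0
    | .inr (.inl (.inl _)) => .inl 1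
    | .inr (.inl (.inr a)) => .inl a.succ.succ
    | .inr (.inr i) => .inr i
  left_inv := by
    rintro (i | i)
    · fin_cases i <;> rfl
    · rfl
  right_inv := by
    rintro (⟨⟩ | ((⟨⟩ | a) | i))
    · rfl
    · rfl
    · fin_cases a <;> rfl
    · rfl

/-! #### Determinant machinery -/

variable {F : Type*} [Field F]

lemma det_schur {m n : Type*} [Fintype m] [Fintype n] [DecidableEq m] [DecidableEq n]
    (A : Matrix m m F) (B : Matrix m n F) (C : Matrix n m F)
    {d : F} (hd : d ≠ 0) :
    (Matrix.fromBlocks A B C (d • 1)).det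
      = d ^ (Fintype.card n) * (A - d⁻¹ • (B * C)).det := by
  have h1 : (d • 1 : Matrix n n F) * (d⁻¹ • 1) = 1 := by
    rw [smul_mul_smul_comm, one_mul, mul_inv_cancel₀ hd, one_smul]
  have h2 : (d⁻¹ • 1 : Matrix n n F) * (d • 1) = 1 := by
    rw [smul_mul_smul_comm, one_mul, inv_mul_cancel₀ hd, one_smul]
  have : Invertible (d • 1 : Matrix n n F) := ⟨d⁻¹ • 1, h2, h1⟩
  rw [Matrix.det_fromBlocks₂₂]
  congr 1
  · rw [Matrix.det_smul, Matrix.det_one, mul_one]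
  · congr 2
    rw [invOf_eq_right_inv h1]
    rw [Matrix.mul_smul, Matrix.mul_one, Matrix.smul_mul]

lemma charm_map {V : Type*} [Fintype V] [DecidableEq V] (G : SimpleGraph V)
    (φ : Polynomial ℝ →+* F) (v w : V) :
    ((charmatrix (signlessLaplacian G)).map φ) v w
      = if v = w then φ X - (G.degree v : F) else if G.Adj v w then -1 else 0 := by
  classical
  rcases eq_or_ne v w with rfl | h
  · have hd : (signlessLaplacian G) v v = ((G.degree v : ℕ) : ℝ) := by
      simp [signlessLaplacian, Matrix.add_apply, Matrix.diagonal_apply_eq]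
    simp [Matrix.map_apply, charmatrix_apply_eq, hd, map_natCast]
  · have ho : (signlessLaplacian G) v w = if G.Adj v w then 1 else 0 := by
      simp [signlessLaplacian, Matrix.add_apply, SimpleGraph.adjMatrix_apply,
        Matrix.diagonal, Matrix.of_apply, h]
    simp only [Matrix.map_apply, charmatrix_apply_ne _ _ _ h, ho, if_neg h]
    split_ifs <;> simp

variable (φ : Polynomial ℝ →+* F)

lemma block1 :
    ((charmatrix (signlessLaplacian (Gr1 s))).map φ).submatrix (e1 s) (e1 s)
      = Matrix.fromBlocks
        (Matrix.of fun i j : Fin 4 =>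
          if i = j then (if i = 0 then φ X - ((s:F)+3) else φ X - 3) else -1)
        (Matrix.of fun (i : Fin 4) (_ : Fin s) => if i = 0 then -1 else 0)
        (Matrix.of fun (_ : Fin s) (j : Fin 4) => if j = 0 then -1 else 0)
        ((φ X - 1) • 1) := by
  ext u v
  rcases u with i | i <;> rcases v with j | j <;>
    simp only [Matrix.submatrix_apply, charm_map]
  · fin_cases i <;> fin_cases j <;>
      simp (config := { decide := true }) [e1, deg1_u s, deg1_t s, a1_uv, a1_vu, a1_tt,
        Matrix.vecHead, Matrix.vecTail] <;>
      push_cast <;> ring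
    · erw [deg1_u]; push_cast; ring
    all_goals erw [deg1_t]
    all_goals norm_num
  · fin_cases i <;> simp (config := { decide := true }) [e1, a1_uv, a1_tp]
  · fin_cases j <;> simp (config := { decide := true }) [e1, a1_vu, a1_pt]
  · rcases eq_or_ne i j with rfl | h
    · simp [e1, deg1_p s, Matrix.smul_apply, Matrix.one_apply]
      erw [deg1_p]; norm_num
    · simp [e1, h, a1_pp, Matrix.smul_apply, Matrix.one_apply, Sum.inr.injEq]

lemma block2 :
    ((charmatrix (signlessLaplacian (Gr2 s))).map φ).submatrix (e2 s) (e2 s)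
      = Matrix.fromBlocks
        (Matrix.of fun i j : Fin 5 =>
          if i = j then
            (if i = 0 then φ X - (4 + ((s-1:ℕ):F)) else if i = 1 then φ X - 4 else φ X - 2)
          else if 2 ≤ i ∧ 2 ≤ j then 0 else -1)
        (Matrix.of fun (i : Fin 5) (_ : Fin (s-1)) => if i = 0 then -1 else 0)
        (Matrix.of fun (_ : Fin (s-1)) (j : Fin 5) => if j = 0 then -1 else 0)
        ((φ X - 1) • 1) := by
  ext u v
  rcases u with i | i <;> rcases v with j | j <;>
    simp only [Matrix.submatrix_apply, charm_map]
  · fin_cases i <;> fin_cases j <;>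
      simp (config := { decide := true }) [e2, deg2_u s, deg2_c s, deg2_l s, a2_uv, a2_vu, a2_cl,
        a2_lc, a2_ll, Matrix.vecHead, Matrix.vecTail, Matrix.cons_val_succ, Matrix.cons_val',
        Matrix.empty_val', Matrix.cons_val_fin_one, Matrix.head_fin_const, Matrix.head_cons,
        Matrix.cons_val_zero, Matrix.cons_val_one] <;>
      push_cast <;> ring
    · erw [deg2_u]; push_cast; ring
    · erw [deg2_c]; norm_num
    all_goals erw [deg2_l]
    all_goals norm_num
  · fin_cases i <;> simp (config := { decide := true }) [e2, a2_uv, a2_yp]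
  · fin_cases j <;> simp (config := { decide := true }) [e2, a2_vu, a2_py]
  · rcases eq_or_ne i j with rfl | h
    · simp [e2, deg2_p s, Matrix.smul_apply, Matrix.one_apply]
      erw [deg2_p]; norm_num
    · simp [e2, h, a2_pp, Matrix.smul_apply, Matrix.one_apply, Sum.inr.injEq]

lemma det1 (hx : φ X - 1 ≠ 0) :
    ((charmatrix (signlessLaplacian (Gr1 s))).map φ).det
      = (φ X - 1)^s * (Matrix.of fun i j : Fin 4 =>
          (if i = j then (if i = 0 then φ X - ((s:F)+3) else φ X - 3) else -1)
          - (if i = 0 ∧ j = 0 then (φ X - 1)⁻¹ * (s:F) else 0)).det := by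
  rw [← Matrix.det_submatrix_equiv_self (e1 s), block1, det_schur _ _ _ hx]
  congr 2
  · exact Fintype.card_fin s
  · ext i j
    simp only [Matrix.sub_apply, Matrix.of_apply, Matrix.smul_apply, Matrix.mul_apply,
      smul_eq_mul]
    congr 1
    by_cases hi : i = 0 <;> by_cases hj : j = 0 <;>
      simp [hi, hj, Finset.sum_const, Fintype.card_fin, mul_comm]

lemma det2 (hx : φ X - 1 ≠ 0) :
    ((charmatrix (signlessLaplacian (Gr2 s))).map φ).det
      = (φ X - 1)^(s-1) * (Matrix.of fun i j : Fin 5 =>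
          (if i = j then
            (if i = 0 then φ X - (4 + ((s-1:ℕ):F)) else if i = 1 then φ X - 4 else φ X - 2)
          else if 2 ≤ i ∧ 2 ≤ j then 0 else -1)
          - (if i = 0 ∧ j = 0 then (φ X - 1)⁻¹ * ((s-1:ℕ):F) else 0)).det := by
  rw [← Matrix.det_submatrix_equiv_self (e2 s), block2, det_schur _ _ _ hx]
  congr 2
  · exact Fintype.card_fin (s-1)
  · ext i j
    simp only [Matrix.sub_apply, Matrix.of_apply, Matrix.smul_apply, Matrix.mul_apply,
      smul_eq_mul]
    congr 1
    by_cases hi : i = 0 <;> by_cases hj : j = 0 <;>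
      simp [hi, hj, Finset.sum_const, Fintype.card_fin, mul_comm]


set_option maxRecDepth 100000 in
set_option maxHeartbeats 2000000 in
lemma det_fin_four_of {R : Type*} [CommRing R] {a b c d e f g h i j k l m n o p : R} :
    Matrix.det !![a,b,c,d; e,f,g,h; i,j,k,l; m,n,o,p] =
      a*(f*(k*p-l*o) - g*(j*p-l*n) + h*(j*o-k*n))
      - b*(e*(k*p-l*o) - g*(i*p-l*m) + h*(i*o-k*m))
      + c*(e*(j*p-l*n) - f*(i*p-l*m) + h*(i*n-j*m))
      - d*(e*(j*o-k*n) - f*(i*o-k*m) + g*(i*n-j*m)) := by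
  rw [Matrix.det_succ_row_zero]
  simp [Fin.sum_univ_succ, Matrix.det_fin_three, Fin.succAbove_of_castSucc_lt, Fin.succAbove_of_lt_succ]
  ring

set_option maxRecDepth 100000 in
set_option maxHeartbeats 2000000 in
lemma det_fin_five_of {R : Type*} [CommRing R] {a00 a01 a02 a03 a04 a10 a11 a12 a13 a14 a20 a21 a22 a23 a24 a30 a31 a32 a33 a34 a40 a41 a42 a43 a44 : R} :
    Matrix.det !![a00,a01,a02,a03,a04;a10,a11,a12,a13,a14;a20,a21,a22,a23,a24;a30,a31,a32,a33,a34;a40,a41,a42,a43,a44] =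
      a00 * Matrix.det !![a11,a12,a13,a14; a21,a22,a23,a24; a31,a32,a33,a34; a41,a42,a43,a44]
      - a01 * Matrix.det !![a10,a12,a13,a14; a20,a22,a23,a24; a30,a32,a33,a34; a40,a42,a43,a44]
      + a02 * Matrix.det !![a10,a11,a13,a14; a20,a21,a23,a24; a30,a31,a33,a34; a40,a41,a43,a44]
      - a03 * Matrix.det !![a10,a11,a12,a14; a20,a21,a22,a24; a30,a31,a32,a34; a40,a41,a42,a44]
      + a04 * Matrix.det !![a10,a11,a12,a13; a20,a21,a22,a23; a30,a31,a32,a33; a40,a41,a42,a43] := by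
  simp [Matrix.det_succ_row_zero, Fin.sum_univ_succ, Fin.succAbove_of_castSucc_lt, Fin.succAbove_of_lt_succ]
  ring

set_option maxHeartbeats 2000000 in
lemma keyalg {F : Type*} [Field F] (x : F) (k : ℕ) (hx : x - 1 ≠ 0) :
    (x - 1) * (Matrix.of fun i j : Fin 4 =>
          (if i = j then (if i = 0 then x - (((k+1:ℕ):F)+3) else x - 3) else -1)
          - (if i = 0 ∧ j = 0 then (x - 1)⁻¹ * ((k+1:ℕ):F) else 0)).det
      = (Matrix.of fun i j : Fin 5 =>
          (if i = j then
            (if i = 0 then x - (4 + ((k:ℕ):F)) else if i = 1 then x - 4 else x - 2)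
          else if 2 ≤ i ∧ 2 ≤ j then 0 else -1)
          - (if i = 0 ∧ j = 0 then (x - 1)⁻¹ * ((k:ℕ):F) else 0)).det := by
  have h4 : (Matrix.of fun i j : Fin 4 =>
          (if i = j then (if i = 0 then x - (((k+1:ℕ):F)+3) else x - 3) else -1)
          - (if i = 0 ∧ j = 0 then (x - 1)⁻¹ * ((k+1:ℕ):F) else 0))
      = !![x - (((k+1:ℕ):F)+3) - (x - 1)⁻¹ * ((k+1:ℕ):F), -1, -1, -1;
           -1, x - 3, -1, -1; -1, -1, x - 3, -1; -1, -1, -1, x - 3] := by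
    ext i j
    fin_cases i <;> fin_cases j <;> simp (config := { decide := true }) [Matrix.vecHead, Matrix.vecTail]
  have h5 : (Matrix.of fun i j : Fin 5 =>
          (if i = j then
            (if i = 0 then x - (4 + ((k:ℕ):F)) else if i = 1 then x - 4 else x - 2)
          else if 2 ≤ i ∧ 2 ≤ j then 0 else -1)
          - (if i = 0 ∧ j = 0 then (x - 1)⁻¹ * ((k:ℕ):F) else 0))
      = !![x - (4 + ((k:ℕ):F)) - (x - 1)⁻¹ * ((k:ℕ):F), -1, -1, -1, -1;
           -1, x - 4, -1, -1, -1; -1, -1, x - 2, 0, 0;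
           -1, -1, 0, x - 2, 0; -1, -1, 0, 0, x - 2] := by
    ext i j
    fin_cases i <;> fin_cases j <;> simp (config := { decide := true }) [Matrix.vecHead, Matrix.vecTail]
  rw [h4, h5, det_fin_four_of, det_fin_five_of]
  simp only [det_fin_four_of]
  field_simp
  push_cast
  ring


lemma iso_deg {V W : Type*} [Fintype V] [Fintype W] {G : SimpleGraph V} {H : SimpleGraph W}
    (f : G ≃g H) (v : V) : H.degree (f v) = G.degree v := by
  classical
  rw [← SimpleGraph.card_neighborSet_eq_degree, ← SimpleGraph.card_neighborSet_eq_degree]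
  exact (Fintype.card_congr (f.mapNeighborSet v)).symm

lemma noiso (s : ℕ) (hs : 1 ≤ s) : ¬ Nonempty (Gr1 s ≃g Gr2 s) := by
  rintro ⟨f⟩
  have hv : (Gr1 s).degree (f.symm (Sum.inr (Sum.inl (Sum.inr 0)))) = 2 :=
    (iso_deg f.symm _).trans (deg2_l s 0)
  rcases h : f.symm (Sum.inr (Sum.inl (Sum.inr 0))) with ⟨⟩ | (a | i) <;> rw [h] at hv
  · rw [deg1_u] at hv; omega
  · rw [deg1_t] at hv; omega
  · rw [deg1_p] at hv; omega

set_option maxRecDepth 40000 in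
lemma cp_eq (s : ℕ) (hs : 1 ≤ s) :
    (signlessLaplacian (Gr1 s)).charpoly = (signlessLaplacian (Gr2 s)).charpoly := by
  classical
  set F := FractionRing (Polynomial ℝ)
  let φ : Polynomial ℝ →+* F := (algebraMap (Polynomial ℝ) F : Polynomial ℝ →+* F)
  have hinj : Function.Injective φ := IsFractionRing.injective _ _
  apply hinj
  have hx : φ X - 1 ≠ 0 := by
    have h1 : φ X - 1 = φ (X - C 1) := by simp
    rw [h1]
    intro h
    exact Polynomial.X_sub_C_ne_zero (1:ℝ) (hinj (by rw [h, map_zero]))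
  show φ (signlessLaplacian (Gr1 s)).charpoly = φ (signlessLaplacian (Gr2 s)).charpoly
  simp only [Matrix.charpoly]
  rw [RingHom.map_det, RingHom.map_det]
  simp only [RingHom.mapMatrix_apply]
  rw [det1 s φ hx, det2 s φ hx]
  obtain ⟨k, rfl⟩ : ∃ k, s = k + 1 := ⟨s - 1, (Nat.succ_pred_eq_of_pos hs).symm⟩
  simp only [Nat.add_sub_cancel]
  rw [pow_succ, mul_assoc]
  congr 1
  exact keyalg (φ X) k hx


end Aux

theorem cospectral_mates_basic (s : ℕ) (hs : 1 ≤ s) :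
    let G1 := joinG (⊥ : SimpleGraph Unit)
      (sumG (cycleGraph 3) (⊥ : SimpleGraph (Fin s)))
    let G2 := joinG (⊥ : SimpleGraph Unit)
      (sumG (completeBipartiteGraph Unit (Fin 3)) (⊥ : SimpleGraph (Fin (s - 1))))
    ¬ Nonempty (G1 ≃g G2) ∧
      (signlessLaplacian G1).charpoly = (signlessLaplacian G2).charpoly := by
  intro G1 G2
  exact ⟨noiso s hs, cp_eq s hs⟩
end

section
/- Let G be a graph of order n whose signless Laplacian spectrum consists (with multiplicity) of eigenvalues all lying in (0, 5] except for one eigenvalue exceeding n; that is, 0 < κ_n ≤ κ_2 ≤ 5 < n < κ_1. If n ≥ 12, then G is connected, its second largest degree d_2 is at most 4, and its maximum degree d_1 is at least n − 3. -/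
open SimpleGraph Matrix Finset
attribute [local instance] Classical.propDecidable
set_option linter.unnecessarySimpa false

section Spec
variable {V : Type*} [Fintype V] [DecidableEq V] {M : Matrix V V ℝ} (hM : M.IsHermitian)

lemma eigsort_length : ((eigMultiset hM).sort (· ≥ ·)).length = Fintype.card V := by
  simp [eigMultiset]

lemma eigsort_sorted : ((eigMultiset hM).sort (· ≥ ·)).Pairwise (· ≥ ·) :=
  Multiset.pairwise_sort _ _

lemma mem_eigsort_iff {r : ℝ} :
    r ∈ (eigMultiset hM).sort (· ≥ ·) ↔ ∃ v, hM.eigenvalues v = r := by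
  rw [Multiset.mem_sort]
  simp [eigMultiset, Multiset.mem_map]

/-- decomposition data -/
lemma spec_decomp :
    ∃ c : (V → ℝ) → (V → ℝ),
      (∀ (x y : V → ℝ) (α β : ℝ),
        c (fun v => α * x v + β * y v) = fun v => α * c x v + β * c y v) ∧
      (∀ x : V → ℝ, x ⬝ᵥ (M *ᵥ x) = ∑ v, hM.eigenvalues v * (c x v) ^ 2) ∧
      (∀ x : V → ℝ, ∑ v, (x v) ^ 2 = ∑ v, (c x v) ^ 2) := by
  classical
  set U : Matrix V V ℝ := (hM.eigenvectorUnitary : Matrix V V ℝ) with hU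
  have hUW : U * star U = 1 := (Matrix.mem_unitaryGroup_iff).mp hM.eigenvectorUnitary.2
  refine ⟨fun x => (star U) *ᵥ x, ?_, ?_, ?_⟩
  · intro x y α β
    funext v
    show (star U *ᵥ (α • x + β • y)) v = _
    rw [Matrix.mulVec_add, Matrix.mulVec_smul, Matrix.mulVec_smul]
    simp
  · intro x
    have hspec := hM.spectral_theorem
    rw [RCLike.ofReal_real_eq_id] at hspec
    simp only [Function.id_comp] at hspec
    have key : M *ᵥ x = U *ᵥ (Matrix.diagonal hM.eigenvalues *ᵥ (star U *ᵥ x)) := by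
      rw [Matrix.mulVec_mulVec, Matrix.mulVec_mulVec]
      conv_lhs => rw [hspec]
      rfl
    rw [key]
    rw [Matrix.dotProduct_mulVec x U, ← Matrix.mulVec_transpose,
      ← Matrix.conjTranspose_eq_transpose_of_trivial]
    simp only [dotProduct, Matrix.mulVec_diagonal]
    rw [Matrix.star_eq_conjTranspose]
    exact Finset.sum_congr rfl fun v _ => by ring
  · intro x
    have hc : star U *ᵥ x = x ᵥ* U := by
      rw [Matrix.star_eq_conjTranspose, Matrix.conjTranspose_eq_transpose_of_trivial,
        Matrix.mulVec_transpose]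
    have h1 : (star U *ᵥ x) ⬝ᵥ (star U *ᵥ x) = x ⬝ᵥ x := by
      nth_rewrite 1 [hc]
      rw [Matrix.dotProduct_mulVec, Matrix.vecMul_vecMul, hUW, Matrix.vecMul_one]
    have e1 : x ⬝ᵥ x = ∑ v, (x v) ^ 2 := by simp [dotProduct, sq]
    have e2 : (star U *ᵥ x) ⬝ᵥ (star U *ᵥ x) = ∑ v, ((star U *ᵥ x) v) ^ 2 := by
      simp [dotProduct, sq]
    rw [← e1, ← h1, e2]

lemma exists_eigenvector (v : V) :
    ∃ w : V → ℝ, w ≠ 0 ∧ M *ᵥ w = hM.eigenvalues v • w := by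
  refine ⟨hM.eigenvectorBasis v, ?_, hM.mulVec_eigenvectorBasis v⟩
  intro h0
  exact hM.eigenvectorBasis.orthonormal.ne_zero v (by simpa using congrArg (WithLp.toLp 2) h0)

end Spec

section ListLemmas
variable {l : List ℝ}

lemma sorted_getD_le (h : l.Pairwise (· ≥ ·)) {i j : ℕ} (hij : i ≤ j) (hj : j < l.length) :
    l.getD j 0 ≤ l.getD i 0 := by
  rw [List.getD_eq_getElem _ _ hj, List.getD_eq_getElem _ _ (lt_of_le_of_lt hij hj)]
  rcases eq_or_lt_of_le hij with rfl | hlt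
  · exact le_rfl
  · exact h.rel_get_of_lt (by exact hlt)

lemma mem_le_getD_zero (h : l.Pairwise (· ≥ ·)) {r : ℝ} (hr : r ∈ l) : r ≤ l.getD 0 0 := by
  obtain ⟨i, rfl⟩ := List.mem_iff_get.mp hr
  have := sorted_getD_le h (Nat.zero_le i) i.isLt
  rw [List.getD_eq_getElem _ _ i.isLt] at this
  simpa using this

lemma getD_last_le_mem (h : l.Pairwise (· ≥ ·)) {r : ℝ} (hr : r ∈ l) :
    l.getD (l.length - 1) 0 ≤ r := by
  obtain ⟨i, rfl⟩ := List.mem_iff_get.mp hr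
  have hi : (i : ℕ) ≤ l.length - 1 := Nat.le_sub_one_of_lt i.isLt
  have hlen : l.length - 1 < l.length := Nat.sub_lt (Nat.lt_of_le_of_lt (Nat.zero_le _) i.isLt) one_pos
  have := sorted_getD_le h hi hlen
  rw [List.getD_eq_getElem _ _ i.isLt] at this
  simpa using this

lemma getD_zero_mem (hl : l ≠ []) : l.getD 0 0 ∈ l := by
  cases l with
  | nil => exact absurd rfl hl
  | cons a t => simp [List.getD]

lemma countP_le_one_sorted (h : l.Pairwise (· ≥ ·)) (h5 : l.getD 1 0 ≤ 5) :
    l.countP (fun x => decide (5 < x)) ≤ 1 := by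
  match l with
  | [] => simp
  | [a] => simpa using (List.countP_le_length (l := [a]) (p := fun x => decide (5 < x)))
  | a :: b :: t =>
    have hb : b ≤ 5 := by simpa [List.getD] using h5
    have htail : (b :: t).countP (fun x => decide (5 < x)) = 0 := by
      rw [List.countP_eq_zero]
      intro x hx
      have hxb : x ≤ b := by
        rcases List.mem_cons.mp hx with rfl | hxt
        · exact le_rfl
        · exact List.rel_of_pairwise_cons (h.of_cons) hxt
      simpa using not_lt.mpr (le_trans hxb hb)
    rw [List.countP_cons, htail]
    split <;> simp

end ListLemmas
section Spec2
variable {V : Type*} [Fintype V] [DecidableEq V] {M : Matrix V V ℝ} (hM : M.IsHermitian)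

lemma min_ithEig_le (v : V) : ithEig hM (Fintype.card V - 1) ≤ hM.eigenvalues v := by
  have hmem : hM.eigenvalues v ∈ (eigMultiset hM).sort (· ≥ ·) :=
    (mem_eigsort_iff hM).mpr ⟨v, rfl⟩
  have := getD_last_le_mem (eigsort_sorted hM) hmem
  rwa [eigsort_length] at this

lemma le_ithEig_zero (v : V) : hM.eigenvalues v ≤ ithEig hM 0 :=
  mem_le_getD_zero (eigsort_sorted hM) ((mem_eigsort_iff hM).mpr ⟨v, rfl⟩)

lemma ithEig_zero_is_eig [Nonempty V] : ∃ v, hM.eigenvalues v = ithEig hM 0 := by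
  have hne : ((eigMultiset hM).sort (· ≥ ·)) ≠ [] := by
    intro h
    have := eigsort_length hM
    rw [h] at this
    simp only [List.length_nil] at this
    exact (Fintype.card_pos (α := V)).ne this
  exact (mem_eigsort_iff hM).mp (getD_zero_mem hne)

lemma card_big_le_one (h : ithEig hM 1 ≤ 5) :
    (Finset.univ.filter fun v => 5 < hM.eigenvalues v).card ≤ 1 := by
  classical
  have hcount := countP_le_one_sorted (eigsort_sorted hM) h
  have h1 : ((eigMultiset hM).sort (· ≥ ·)).countP (fun x => decide (5 < x))
      = Multiset.countP (fun x => 5 < x) (eigMultiset hM) := by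
    conv_rhs => rw [← Multiset.sort_eq (eigMultiset hM) (· ≥ ·)]
    rw [Multiset.coe_countP]
  have h2 : Multiset.countP (fun x => 5 < x) (eigMultiset hM)
      = (Finset.univ.filter fun v => 5 < hM.eigenvalues v).card := by
    rw [eigMultiset, Multiset.countP_map]
    rfl
  rw [h1, h2] at hcount
  exact hcount

/-- Rayleigh lower bound by the smallest eigenvalue. -/
lemma min_rayleigh (z : V → ℝ) :
    ithEig hM (Fintype.card V - 1) * (∑ v, (z v) ^ 2) ≤ z ⬝ᵥ (M *ᵥ z) := by
  obtain ⟨c, -, hquad, hnorm⟩ := spec_decomp hM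
  rw [hquad, hnorm]
  rw [Finset.mul_sum]
  refine Finset.sum_le_sum fun v _ => ?_
  exact mul_le_mul_of_nonneg_right (min_ithEig_le hM v) (sq_nonneg _)

/-- If the quadratic form is bounded by C, the top eigenvalue is at most C. -/
lemma top_le_of_qf_bound [Nonempty V] (C : ℝ)
    (h : ∀ z : V → ℝ, z ⬝ᵥ (M *ᵥ z) ≤ C * ∑ v, (z v) ^ 2) : ithEig hM 0 ≤ C := by
  obtain ⟨v, hv⟩ := ithEig_zero_is_eig hM
  obtain ⟨w, hw0, hww⟩ := exists_eigenvector hM v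
  have hsq : 0 < ∑ u, (w u) ^ 2 := by
    obtain ⟨u, hu⟩ : ∃ u, w u ≠ 0 := by
      by_contra hc
      push_neg at hc
      exact hw0 (funext hc)
    exact Finset.sum_pos' (fun i _ => sq_nonneg _) ⟨u, Finset.mem_univ u, by positivity⟩
  have hqe : w ⬝ᵥ (M *ᵥ w) = hM.eigenvalues v * ∑ u, (w u) ^ 2 := by
    rw [hww]
    simp [dotProduct, Finset.mul_sum, sq]
    exact Finset.sum_congr rfl fun u _ => by ring
  have := h w
  rw [hqe, hv] at this
  exact le_of_mul_le_mul_right (by linarith) hsq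

/-- two-dimensional test subspace forces the second eigenvalue up -/
lemma second_eig_lower (x y : V → ℝ)
    (h : ∀ α β : ℝ, (α ≠ 0 ∨ β ≠ 0) →
      5 * (∑ v, (α * x v + β * y v) ^ 2)
        < (fun v => α * x v + β * y v) ⬝ᵥ (M *ᵥ fun v => α * x v + β * y v)) :
    5 < ithEig hM 1 := by
  by_contra hle
  push_neg at hle
  have hcard := card_big_le_one hM hle
  obtain ⟨c, hlin, hquad, hnorm⟩ := spec_decomp hM
  -- helper: if c z v₀ = 0 possibility handled via general bound
  have key : ∀ (α β : ℝ), (α ≠ 0 ∨ β ≠ 0) →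
      (∀ v, 5 < hM.eigenvalues v → c (fun v => α * x v + β * y v) v = 0) → False := by
    intro α β hab hzero
    have hq := hquad (fun v => α * x v + β * y v)
    have hn := hnorm (fun v => α * x v + β * y v)
    have hb : (fun v => α * x v + β * y v) ⬝ᵥ (M *ᵥ fun v => α * x v + β * y v)
        ≤ 5 * ∑ v, (α * x v + β * y v) ^ 2 := by
      rw [hq, hn, Finset.mul_sum]
      refine Finset.sum_le_sum fun v _ => ?_
      by_cases hv : 5 < hM.eigenvalues v
      · rw [hzero v hv]
        simp
      · push_neg at hv
        exact mul_le_mul_of_nonneg_right hv (sq_nonneg _)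
    exact absurd (h α β hab) (not_lt.mpr hb)
  rcases (Finset.univ.filter fun v => 5 < hM.eigenvalues v).eq_empty_or_nonempty with he | ⟨v₀, hv₀⟩
  · refine key 1 0 (Or.inl one_ne_zero) fun v hv => ?_
    have hvmem : v ∈ Finset.univ.filter fun u => 5 < hM.eigenvalues u :=
      Finset.mem_filter.mpr ⟨Finset.mem_univ v, hv⟩
    rw [he] at hvmem
    exact absurd hvmem (Finset.notMem_empty v)
  · have honly : ∀ v, 5 < hM.eigenvalues v → v = v₀ := by
      intro v hv
      by_contra hne
      have h2 : ({v, v₀} : Finset V) ⊆ Finset.univ.filter fun u => 5 < hM.eigenvalues u := by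
        intro u hu
        rcases Finset.mem_insert.mp hu with rfl | hu
        · exact Finset.mem_filter.mpr ⟨Finset.mem_univ _, hv⟩
        · rw [Finset.mem_singleton.mp hu]
          exact hv₀
      have := Finset.card_le_card h2
      rw [Finset.card_pair hne] at this
      omega
    set α := c y v₀ with hα
    set β := -(c x v₀) with hβ
    by_cases h0 : α = 0 ∧ β = 0
    · refine key 1 0 (Or.inl one_ne_zero) fun v hv => ?_
      have hv' := honly v hv
      subst hv'
      have : c (fun u => 1 * x u + 0 * y u) v = 1 * c x v + 0 * c y v := by
        rw [hlin x y 1 0]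
      rw [this]
      have : c x v = 0 := by
        have := h0.2
        rw [hβ] at this
        linarith [neg_eq_zero.mp this]
      rw [this]; ring
    · refine key α β ?_ fun v hv => ?_
      · by_contra hcon
        push_neg at hcon
        exact h0 ⟨hcon.1, hcon.2⟩
      · have hv' := honly v hv
        subst hv'
        have : c (fun u => α * x u + β * y u) v = α * c x v + β * c y v := by
          rw [hlin x y α β]
        rw [this, hα, hβ]
        ring

end Spec2
section GraphQF
variable {V : Type*} [Fintype V] [DecidableEq V] (G : SimpleGraph V)

private lemma adj_row_sum (u : V) :
    ∑ v, G.adjMatrix ℝ u v = (G.degree u : ℝ) := by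
  simp only [SimpleGraph.adjMatrix_apply]
  rw [Finset.sum_boole]
  congr 1
  rw [SimpleGraph.degree, SimpleGraph.neighborFinset_eq_filter]

private lemma adj_symm_entry (u v : V) : G.adjMatrix ℝ u v = G.adjMatrix ℝ v u := by
  simp only [SimpleGraph.adjMatrix_apply]
  congr 1
  simp [SimpleGraph.adj_comm]

lemma qf_expand (z : V → ℝ) :
    z ⬝ᵥ (signlessLaplacian G *ᵥ z)
      = ∑ v, (G.degree v : ℝ) * z v ^ 2 + ∑ u, ∑ v, G.adjMatrix ℝ u v * (z u * z v) := by
  rw [signlessLaplacian, Matrix.add_mulVec, dotProduct_add]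
  congr 1
  · simp only [dotProduct, Matrix.mulVec_diagonal]
    refine Finset.sum_congr rfl fun v _ => ?_
    ring
  · rw [SimpleGraph.dotProduct_mulVec_adjMatrix]
    refine Finset.sum_congr rfl fun u _ => Finset.sum_congr rfl fun v _ => ?_
    simp only [SimpleGraph.adjMatrix_apply]
    split <;> simp

lemma qf_double (z : V → ℝ) :
    2 * (z ⬝ᵥ (signlessLaplacian G *ᵥ z))
      = ∑ u, ∑ v, G.adjMatrix ℝ u v * (z u + z v) ^ 2 := by
  have expand : ∀ u v : V, G.adjMatrix ℝ u v * (z u + z v) ^ 2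
      = G.adjMatrix ℝ u v * z u ^ 2 + G.adjMatrix ℝ u v * z v ^ 2
        + 2 * (G.adjMatrix ℝ u v * (z u * z v)) := fun u v => by ring
  have hT1 : ∑ u, ∑ v, G.adjMatrix ℝ u v * z u ^ 2 = ∑ v, (G.degree v : ℝ) * z v ^ 2 := by
    refine Finset.sum_congr rfl fun u _ => ?_
    rw [← Finset.sum_mul, adj_row_sum]
  have hT2 : ∑ u, ∑ v, G.adjMatrix ℝ u v * z v ^ 2 = ∑ v, (G.degree v : ℝ) * z v ^ 2 := by
    rw [Finset.sum_comm]
    refine Finset.sum_congr rfl fun v _ => ?_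
    calc ∑ u, G.adjMatrix ℝ u v * z v ^ 2 = (∑ u, G.adjMatrix ℝ v u) * z v ^ 2 := by
          rw [Finset.sum_mul]
          exact Finset.sum_congr rfl fun u _ => by rw [adj_symm_entry]
      _ = _ := by rw [adj_row_sum]
  calc 2 * (z ⬝ᵥ (signlessLaplacian G *ᵥ z))
      = ∑ v, (G.degree v : ℝ) * z v ^ 2 + ∑ v, (G.degree v : ℝ) * z v ^ 2
        + 2 * ∑ u, ∑ v, G.adjMatrix ℝ u v * (z u * z v) := by rw [qf_expand]; ring
    _ = ∑ u, ∑ v, (G.adjMatrix ℝ u v * z u ^ 2 + G.adjMatrix ℝ u v * z v ^ 2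
        + 2 * (G.adjMatrix ℝ u v * (z u * z v))) := by
        simp only [Finset.sum_add_distrib, hT1, hT2, ← Finset.mul_sum]
    _ = _ := by exact (Finset.sum_congr rfl fun u _ => Finset.sum_congr rfl fun v _ =>
          (expand u v).symm)

private lemma amgm_pair (p q a b : ℝ) (hp : 0 < p) (hq : 0 < q) (hpq : p * q = 1) :
    (a + b) ^ 2 ≤ (1 + p) * a ^ 2 + (1 + q) * b ^ 2 := by
  nlinarith [sq_nonneg (p * a - b), hp.le, mul_pos hp hq]

/-- Master upper bound for the signless Laplacian quadratic form. -/
lemma qf_upper (t : V) (A B : ℝ) (hB0 : 0 ≤ B)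
    (hA : ∀ u, (G.degree u : ℝ) ≤ A) (hB : ∀ u, u ≠ t → (G.degree u : ℝ) ≤ B)
    (z : V → ℝ) :
    z ⬝ᵥ (signlessLaplacian G *ᵥ z) ≤ (A + B) * ∑ v, z v ^ 2 := by
  have hA0 : (0:ℝ) ≤ A := le_trans (by positivity) (hA t)
  have key1 : ∀ u, ∑ v, G.adjMatrix ℝ u v * (1 + (G.degree v : ℝ) / (G.degree u : ℝ))
      ≤ A + B := by
    intro u
    by_cases hdu : G.degree u = 0
    · have hz : ∀ v, G.adjMatrix ℝ u v = 0 := by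
        intro v
        simp only [SimpleGraph.adjMatrix_apply, ite_eq_right_iff]
        intro hadj
        exact (((G.degree_pos_iff_exists_adj u).mpr ⟨v, hadj⟩).ne' hdu).elim
      simp only [hz, zero_mul, Finset.sum_const_zero]
      linarith
    · have hdupos : (0:ℝ) < (G.degree u : ℝ) := by
        exact_mod_cast Nat.pos_of_ne_zero hdu
      have hsplit : ∑ v, G.adjMatrix ℝ u v * (1 + (G.degree v : ℝ) / (G.degree u : ℝ))
          = (G.degree u : ℝ) + (∑ v, G.adjMatrix ℝ u v * (G.degree v : ℝ)) / (G.degree u : ℝ) := by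
        have hper : ∀ v : V, G.adjMatrix ℝ u v * (1 + (G.degree v : ℝ) / (G.degree u : ℝ))
            = G.adjMatrix ℝ u v + (G.adjMatrix ℝ u v * (G.degree v : ℝ)) / (G.degree u : ℝ) :=
          fun v => by rw [mul_add, mul_one, mul_div_assoc]
        rw [Finset.sum_congr rfl (fun v _ => hper v), Finset.sum_add_distrib, adj_row_sum,
          Finset.sum_div]
      rw [hsplit]
      rcases eq_or_ne u t with rfl | hut
      · have hS : ∑ v, G.adjMatrix ℝ u v * (G.degree v : ℝ) ≤ B * (G.degree u : ℝ) := by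
          calc ∑ v, G.adjMatrix ℝ u v * (G.degree v : ℝ) ≤ ∑ v, G.adjMatrix ℝ u v * B := by
                refine Finset.sum_le_sum fun v _ => ?_
                simp only [SimpleGraph.adjMatrix_apply]
                split
                · rename_i hadj
                  simpa using hB v (G.ne_of_adj hadj).symm
                · simp
            _ = B * (G.degree u : ℝ) := by rw [← Finset.sum_mul, adj_row_sum]; ring
        have : (∑ v, G.adjMatrix ℝ u v * (G.degree v : ℝ)) / (G.degree u : ℝ) ≤ B :=
          (div_le_iff₀ hdupos).mpr hS
        linarith [hA u]
      · have hS : ∑ v, G.adjMatrix ℝ u v * (G.degree v : ℝ) ≤ A * (G.degree u : ℝ) := by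
          calc ∑ v, G.adjMatrix ℝ u v * (G.degree v : ℝ) ≤ ∑ v, G.adjMatrix ℝ u v * A := by
                refine Finset.sum_le_sum fun v _ => ?_
                simp only [SimpleGraph.adjMatrix_apply]
                split
                · simpa using hA v
                · simp
            _ = A * (G.degree u : ℝ) := by rw [← Finset.sum_mul, adj_row_sum]; ring
        have : (∑ v, G.adjMatrix ℝ u v * (G.degree v : ℝ)) / (G.degree u : ℝ) ≤ A :=
          (div_le_iff₀ hdupos).mpr hS
        linarith [hB u hut]
  have pair_bound : ∀ u v, G.adjMatrix ℝ u v * (z u + z v) ^ 2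
      ≤ G.adjMatrix ℝ u v * ((1 + (G.degree v : ℝ) / (G.degree u : ℝ)) * z u ^ 2
        + (1 + (G.degree u : ℝ) / (G.degree v : ℝ)) * z v ^ 2) := by
    intro u v
    simp only [SimpleGraph.adjMatrix_apply]
    split
    · rename_i hadj
      have hdu : (0:ℝ) < (G.degree u : ℝ) := by
        exact_mod_cast (G.degree_pos_iff_exists_adj u).mpr ⟨v, hadj⟩
      have hdv : (0:ℝ) < (G.degree v : ℝ) := by
        exact_mod_cast (G.degree_pos_iff_exists_adj v).mpr ⟨u, hadj.symm⟩
      have := amgm_pair ((G.degree v : ℝ) / (G.degree u : ℝ))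
        ((G.degree u : ℝ) / (G.degree v : ℝ)) (z u) (z v)
        (by positivity) (by positivity) (by field_simp)
      simpa using this
    · simp
  have step1 : 2 * (z ⬝ᵥ (signlessLaplacian G *ᵥ z))
      ≤ ∑ u, ∑ v, G.adjMatrix ℝ u v * ((1 + (G.degree v : ℝ) / (G.degree u : ℝ)) * z u ^ 2
          + (1 + (G.degree u : ℝ) / (G.degree v : ℝ)) * z v ^ 2) := by
    rw [qf_double]
    exact Finset.sum_le_sum fun u _ => Finset.sum_le_sum fun v _ => pair_bound u v
  have split2 : ∑ u, ∑ v, G.adjMatrix ℝ u v * ((1 + (G.degree v : ℝ) / (G.degree u : ℝ)) * z u ^ 2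
          + (1 + (G.degree u : ℝ) / (G.degree v : ℝ)) * z v ^ 2)
      = (∑ u, (∑ v, G.adjMatrix ℝ u v * (1 + (G.degree v : ℝ) / (G.degree u : ℝ))) * z u ^ 2)
        + ∑ u, ∑ v, G.adjMatrix ℝ u v * (1 + (G.degree u : ℝ) / (G.degree v : ℝ)) * z v ^ 2 := by
    rw [← Finset.sum_add_distrib]
    refine Finset.sum_congr rfl fun u _ => ?_
    rw [Finset.sum_mul, ← Finset.sum_add_distrib]
    refine Finset.sum_congr rfl fun v _ => by ring
  have half2 : ∑ u, ∑ v, G.adjMatrix ℝ u v * (1 + (G.degree u : ℝ) / (G.degree v : ℝ)) * z v ^ 2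
      = ∑ v, (∑ u, G.adjMatrix ℝ v u * (1 + (G.degree u : ℝ) / (G.degree v : ℝ))) * z v ^ 2 := by
    rw [Finset.sum_comm]
    refine Finset.sum_congr rfl fun v _ => ?_
    rw [Finset.sum_mul]
    refine Finset.sum_congr rfl fun u _ => by rw [adj_symm_entry]
  have final : ∑ u, (∑ v, G.adjMatrix ℝ u v * (1 + (G.degree v : ℝ) / (G.degree u : ℝ))) * z u ^ 2
      ≤ (A + B) * ∑ v, z v ^ 2 := by
    rw [Finset.mul_sum]
    exact Finset.sum_le_sum fun u _ => mul_le_mul_of_nonneg_right (key1 u) (sq_nonneg _)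
  have final2 : ∑ v, (∑ u, G.adjMatrix ℝ v u * (1 + (G.degree u : ℝ) / (G.degree v : ℝ))) * z v ^ 2
      ≤ (A + B) * ∑ v, z v ^ 2 := by
    rw [Finset.mul_sum]
    exact Finset.sum_le_sum fun v _ => mul_le_mul_of_nonneg_right (key1 v) (sq_nonneg _)
  rw [split2, half2] at step1
  linarith

end GraphQF
section PairLower
variable {V : Type*} [Fintype V] [DecidableEq V] (G : SimpleGraph V)

lemma qf_pair_lower (t w : V) (htw : t ≠ w) (z : V → ℝ) :
    (∑ v ∈ G.neighborFinset t, (z t + z v) ^ 2)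
      + (∑ v ∈ G.neighborFinset w, (z w + z v) ^ 2)
      - G.adjMatrix ℝ t w * (z t + z w) ^ 2
      ≤ z ⬝ᵥ (signlessLaplacian G *ᵥ z) := by
  classical
  set g : V → V → ℝ := fun u v => G.adjMatrix ℝ u v * (z u + z v) ^ 2 with hg
  have hgnn : ∀ u v, 0 ≤ g u v := by
    intro u v
    simp only [hg, SimpleGraph.adjMatrix_apply]
    split
    · positivity
    · simp
  have hgsym : ∀ u v, g u v = g v u := by
    intro u v
    simp only [hg]
    rw [adj_symm_entry, add_comm (z u) (z v)]
  have hgdiag : ∀ u, g u u = 0 := by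
    intro u
    simp [hg]
  have hR : ∀ u, ∑ v, g u v = ∑ v ∈ G.neighborFinset u, (z u + z v) ^ 2 := by
    intro u
    rw [SimpleGraph.neighborFinset_eq_filter, Finset.sum_filter]
    refine Finset.sum_congr rfl fun v _ => ?_
    simp only [hg, SimpleGraph.adjMatrix_apply]
    split <;> simp
  set P : Finset V := {t, w} with hP
  have hPuniv : P ⊆ Finset.univ := Finset.subset_univ P
  have hsplit : ∑ u, ∑ v, g u v
      = (∑ u ∈ Finset.univ \ P, ∑ v, g u v) + ∑ u ∈ P, ∑ v, g u v :=
    (Finset.sum_sdiff hPuniv).symm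
  have hPsum : ∑ u ∈ P, ∑ v, g u v = (∑ v, g t v) + ∑ v, g w v :=
    Finset.sum_pair htw
  have hinner : ∀ u ∈ Finset.univ \ P, ∑ v ∈ P, g u v ≤ ∑ v, g u v := by
    intro u _
    exact Finset.sum_le_sum_of_subset_of_nonneg hPuniv fun v _ _ => hgnn u v
  have hstep : ∑ u ∈ Finset.univ \ P, ∑ v ∈ P, g u v ≤ ∑ u ∈ Finset.univ \ P, ∑ v, g u v :=
    Finset.sum_le_sum hinner
  have hcomm : ∑ u ∈ Finset.univ \ P, ∑ v ∈ P, g u v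
      = ∑ v ∈ P, ∑ u ∈ Finset.univ \ P, g u v := Finset.sum_comm
  have hcolumn : ∀ v, ∑ u ∈ Finset.univ \ P, g u v = (∑ u, g v u) - (g t v + g w v) := by
    intro v
    have h1 : (∑ u ∈ Finset.univ \ P, g u v) + ∑ u ∈ P, g u v = ∑ u, g u v :=
      Finset.sum_sdiff hPuniv
    have h2 : ∑ u ∈ P, g u v = g t v + g w v := Finset.sum_pair htw
    have h3 : ∑ u, g u v = ∑ u, g v u := Finset.sum_congr rfl fun u _ => hgsym u v
    linarith [h1, h2.symm ▸ h1, h3]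
  have hPcol : ∑ v ∈ P, ((∑ u, g v u) - (g t v + g w v))
      = (∑ v, g t v) + (∑ v, g w v) - 2 * g t w := by
    rw [Finset.sum_pair htw]
    rw [hgdiag t, hgdiag w, hgsym w t]
    ring
  have hdouble := qf_double G z
  have hfinal : 2 * (z ⬝ᵥ (signlessLaplacian G *ᵥ z))
      ≥ ((∑ v, g t v) + ∑ v, g w v) + ((∑ v, g t v) + (∑ v, g w v) - 2 * g t w) := by
    rw [hdouble]
    have : ∑ u, ∑ v, g u v ≥ ((∑ v, g t v) + ∑ v, g w v)
        + ((∑ v, g t v) + (∑ v, g w v) - 2 * g t w) := by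
      rw [hsplit, hPsum]
      have : ∑ u ∈ Finset.univ \ P, ∑ v, g u v
          ≥ (∑ v, g t v) + (∑ v, g w v) - 2 * g t w := by
        calc ∑ u ∈ Finset.univ \ P, ∑ v, g u v ≥ ∑ u ∈ Finset.univ \ P, ∑ v ∈ P, g u v :=
              hstep
          _ = ∑ v ∈ P, ∑ u ∈ Finset.univ \ P, g u v := hcomm
          _ = ∑ v ∈ P, ((∑ u, g v u) - (g t v + g w v)) :=
              Finset.sum_congr rfl fun v _ => hcolumn v
          _ = _ := hPcol
      linarith
    exact this
  have hgtw : g t w = G.adjMatrix ℝ t w * (z t + z w) ^ 2 := rfl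
  rw [hR t, hR w] at hfinal
  linarith

/-- no kernel vector if the smallest eigenvalue is positive -/
lemma no_kernel {M : Matrix V V ℝ} (hM : M.IsHermitian)
    (hpos : 0 < ithEig hM (Fintype.card V - 1)) (x : V → ℝ) (hx : x ≠ 0) :
    M *ᵥ x ≠ 0 := by
  intro h0
  have h1 := min_rayleigh hM x
  rw [h0, dotProduct_zero] at h1
  have hsq : 0 < ∑ v, (x v) ^ 2 := by
    obtain ⟨u, hu⟩ : ∃ u, x u ≠ 0 := by
      by_contra hc
      push_neg at hc
      exact hx (funext hc)
    exact Finset.sum_pos' (fun i _ => sq_nonneg _) ⟨u, Finset.mem_univ u, by positivity⟩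
  nlinarith

end PairLower
section TestVectors
variable {V : Type*} [Fintype V] [DecidableEq V] (G : SimpleGraph V)

private lemma sum_const_of (s : Finset V) (f : V → ℝ) (c : ℝ) (h : ∀ v ∈ s, f v = c) :
    ∑ v ∈ s, f v = s.card * c := by
  rw [Finset.sum_congr rfl h, Finset.sum_const, nsmul_eq_mul]

private lemma pd2 {m11 m12 m22 α β : ℝ} (h1 : 0 < m11) (hdet : m12 ^ 2 < m11 * m22)
    (hab : α ≠ 0 ∨ β ≠ 0) : 0 < m11 * α ^ 2 + 2 * m12 * (α * β) + m22 * β ^ 2 := by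
  rcases eq_or_ne β 0 with rfl | hβ
  · have hα : α ≠ 0 := by
      rcases hab with h | h
      · exact h
      · exact absurd rfl h
    have : 0 < α ^ 2 := by positivity
    nlinarith
  · have key : m11 * (m11 * α ^ 2 + 2 * m12 * (α * β) + m22 * β ^ 2)
        = (m11 * α + m12 * β) ^ 2 + (m11 * m22 - m12 ^ 2) * β ^ 2 := by ring
    have hb2 : 0 < β ^ 2 := by positivity
    have h2 : 0 < (m11 * α + m12 * β) ^ 2 + (m11 * m22 - m12 ^ 2) * β ^ 2 :=
      add_pos_of_nonneg_of_pos (sq_nonneg _) (mul_pos (by linarith) hb2)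
    nlinarith

/-- partition of the squared norm over {t, w} and the rest -/
private lemma n2_split (t w : V) (htw : t ≠ w) (z : V → ℝ) :
    ∑ v, z v ^ 2 = z t ^ 2 + z w ^ 2 + ∑ v ∈ Finset.univ \ {t, w}, z v ^ 2 := by
  have h := Finset.sum_sdiff (Finset.subset_univ ({t, w} : Finset V))
    (f := fun v => z v ^ 2)
  rw [Finset.sum_pair htw] at h
  linarith

end TestVectors
section NonAdjCase
variable {V : Type*} [Fintype V] [DecidableEq V] (G : SimpleGraph V)

lemma nonadj_case (t w : V) (htw : t ≠ w) (hna : ¬ G.Adj t w)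
    (ha7 : 7 ≤ G.degree t) (hb5 : 5 ≤ G.degree w) (hba : G.degree w ≤ G.degree t)
    (h13 : 13 ≤ G.degree t + G.degree w) (α β : ℝ) (hab : α ≠ 0 ∨ β ≠ 0) :
    5 * (∑ v, (α * (if v = t then (1:ℝ) else 0)
        + β * (if v = w then (3:ℝ) else if G.Adj w v then 1 else 0)) ^ 2)
      < (fun v => α * (if v = t then (1:ℝ) else 0)
        + β * (if v = w then (3:ℝ) else if G.Adj w v then 1 else 0))
        ⬝ᵥ (signlessLaplacian G *ᵥ fun v => α * (if v = t then (1:ℝ) else 0)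
        + β * (if v = w then (3:ℝ) else if G.Adj w v then 1 else 0)) := by
  classical
  set z : V → ℝ := fun v => α * (if v = t then (1:ℝ) else 0)
        + β * (if v = w then (3:ℝ) else if G.Adj w v then 1 else 0) with hz
  have hnaw : ¬ G.Adj w t := fun h => hna h.symm
  have hzt : z t = α := by simp [hz, htw, hnaw]
  have hzw : z w = 3 * β := by simp [hz, htw.symm]; ring
  -- z on neighbors
  have hzS : ∀ v, G.Adj t v → G.Adj w v → z v = β := by
    intro v h1 h2
    have hvt : v ≠ t := fun h => (h ▸ h1).ne rfl
    have hvw : v ≠ w := fun h => (h ▸ h2).ne rfl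
    simp [hz, hvt, hvw, h2]
  have hzP : ∀ v, v ≠ t → v ≠ w → ¬ G.Adj w v → z v = 0 := by
    intro v h1 h2 h3
    simp [hz, h1, h2, h3]
  set s : ℕ := (G.neighborFinset t ∩ G.neighborFinset w).card with hs
  set a : ℕ := G.degree t with hadeg
  set b : ℕ := G.degree w with hbdeg
  set p : ℕ := ((G.neighborFinset t).filter
    (fun v => ¬ v ∈ G.neighborFinset w)).card with hp
  have hsp : s + p = a := by
    rw [hs, hp, hadeg, ← SimpleGraph.card_neighborFinset_eq_degree]
    rw [← Finset.filter_mem_eq_inter]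
    exact Finset.card_filter_add_card_filter_not _
  have hsb : s ≤ b := by
    rw [hs, hbdeg, ← SimpleGraph.card_neighborFinset_eq_degree]
    exact Finset.card_le_card Finset.inter_subset_right
  -- SumT
  have hSumT : ∑ v ∈ G.neighborFinset t, (z t + z v) ^ 2
      = s * (α + β) ^ 2 + p * α ^ 2 := by
    have hpart1 : ∑ v ∈ (G.neighborFinset t).filter (fun v => v ∈ G.neighborFinset w),
        (z t + z v) ^ 2 = s * (α + β) ^ 2 := by
      have hc : ((G.neighborFinset t).filter (fun v => v ∈ G.neighborFinset w)).card = s := by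
        rw [hs, Finset.filter_mem_eq_inter]
      rw [sum_const_of _ _ ((α + β) ^ 2) ?hval, hc]
      case hval =>
        intro v hv
        rw [Finset.mem_filter, SimpleGraph.mem_neighborFinset, SimpleGraph.mem_neighborFinset] at hv
        rw [hzt, hzS v hv.1 hv.2]
    have hpart2 : ∑ v ∈ (G.neighborFinset t).filter (fun v => ¬ v ∈ G.neighborFinset w),
        (z t + z v) ^ 2 = p * α ^ 2 := by
      rw [sum_const_of _ _ (α ^ 2) ?hval2]
      case hval2 =>
        intro v hv
        rw [Finset.mem_filter, SimpleGraph.mem_neighborFinset, SimpleGraph.mem_neighborFinset] at hv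
        have hvt : v ≠ t := fun h => (h ▸ hv.1).ne rfl
        have hvw : v ≠ w := fun h => hna (h ▸ hv.1)
        rw [hzt, hzP v hvt hvw (fun h => hv.2 h), add_zero]
    rw [← Finset.sum_filter_add_sum_filter_not (G.neighborFinset t)
      (fun v => v ∈ G.neighborFinset w), hpart1, hpart2]
  -- SumW
  have hSumW : ∑ v ∈ G.neighborFinset w, (z w + z v) ^ 2 = b * (4 * β) ^ 2 := by
    rw [sum_const_of _ _ ((4 * β) ^ 2) ?hvalw, SimpleGraph.card_neighborFinset_eq_degree]
    case hvalw =>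
      intro v hv
      rw [SimpleGraph.mem_neighborFinset] at hv
      have hvt : v ≠ t := fun h => hnaw (h ▸ hv)
      have hvw : v ≠ w := fun h => (h ▸ hv).ne rfl
      have : z v = β := by simp [hz, hvt, hvw, hv]
      rw [hzw, this]
      ring
  -- squared norm
  have hn2 : ∑ v, z v ^ 2 = α ^ 2 + 9 * β ^ 2 + b * β ^ 2 := by
    rw [n2_split t w htw z, hzt, hzw]
    have hrest : ∑ v ∈ Finset.univ \ {t, w}, z v ^ 2 = b * β ^ 2 := by
      rw [← Finset.sum_filter_add_sum_filter_not (Finset.univ \ {t, w})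
        (fun v => v ∈ G.neighborFinset w)]
      have h1 : ((Finset.univ \ {t, w}).filter (fun v => v ∈ G.neighborFinset w))
          = G.neighborFinset w := by
        apply Finset.ext
        intro v
        simp only [Finset.mem_filter, Finset.mem_sdiff, Finset.mem_univ, true_and,
          Finset.mem_insert, Finset.mem_singleton]
        constructor
        · exact fun h => h.2
        · intro hv
          rw [SimpleGraph.mem_neighborFinset] at hv
          refine ⟨?_, by rwa [SimpleGraph.mem_neighborFinset]⟩
          push_neg
          exact ⟨fun h => hnaw (h ▸ hv), fun h => (h ▸ hv).ne rfl⟩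
      rw [h1]
      have h2 : ∑ v ∈ G.neighborFinset w, z v ^ 2 = b * β ^ 2 := by
        rw [sum_const_of _ _ (β ^ 2) ?hvaln, SimpleGraph.card_neighborFinset_eq_degree]
        case hvaln =>
          intro v hv
          rw [SimpleGraph.mem_neighborFinset] at hv
          have hvt : v ≠ t := fun h => hnaw (h ▸ hv)
          have hvw : v ≠ w := fun h => (h ▸ hv).ne rfl
          simp [hz, hvt, hvw, hv]
      have h3 : ∑ v ∈ (Finset.univ \ {t, w}).filter
          (fun v => ¬ v ∈ G.neighborFinset w), z v ^ 2 = 0 := by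
        refine Finset.sum_eq_zero fun v hv => ?_
        rw [Finset.mem_filter, Finset.mem_sdiff, Finset.mem_insert, Finset.mem_singleton] at hv
        push_neg at hv
        rw [SimpleGraph.mem_neighborFinset] at hv
        rw [hzP v hv.1.2.1 hv.1.2.2 hv.2]
        ring
      rw [h2, h3, add_zero]
    rw [hrest]
    ring
  -- lower bound for the quadratic form
  have hlow := qf_pair_lower G t w htw z
  have hetw : G.adjMatrix ℝ t w = 0 := by simp [hna]
  rw [hSumT, hSumW, hetw] at hlow
  -- numeric positivity
  have haR : (7:ℝ) ≤ (a:ℝ) := by exact_mod_cast ha7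
  have hbR : (5:ℝ) ≤ (b:ℝ) := by exact_mod_cast hb5
  have hbaR : (b:ℝ) ≤ (a:ℝ) := by exact_mod_cast hba
  have h13R : (13:ℝ) ≤ (a:ℝ) + (b:ℝ) := by exact_mod_cast h13
  have hsbR : (s:ℝ) ≤ (b:ℝ) := by exact_mod_cast hsb
  have hs0 : (0:ℝ) ≤ (s:ℝ) := Nat.cast_nonneg s
  have hspR : (s:ℝ) + (p:ℝ) = (a:ℝ) := by exact_mod_cast hsp
  have hdet : ((s:ℝ)) ^ 2 < ((a:ℝ) - 5) * (11 * (b:ℝ) + (s:ℝ) - 45) := by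
    nlinarith [mul_nonneg (sub_nonneg.mpr hbaR) (sub_nonneg.mpr hsbR),
      mul_nonneg (sub_nonneg.mpr hsbR) hs0,
      mul_nonneg (sub_nonneg.mpr hbaR) hs0,
      mul_nonneg (sub_nonneg.mpr hsbR) (sub_nonneg.mpr hsbR)]
  have hpos := pd2 (m11 := (a:ℝ) - 5) (m12 := (s:ℝ)) (m22 := 11 * (b:ℝ) + (s:ℝ) - 45)
    (by linarith) hdet hab
  have hiden : (s:ℝ) * (α + β) ^ 2 + (p:ℝ) * α ^ 2 + (b:ℝ) * (4 * β) ^ 2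
      - 5 * ((α:ℝ) ^ 2 + 9 * β ^ 2 + (b:ℝ) * β ^ 2)
      = ((a:ℝ) - 5) * α ^ 2 + 2 * (s:ℝ) * (α * β)
        + (11 * (b:ℝ) + (s:ℝ) - 45) * β ^ 2 := by
    rw [← hspR]
    ring
  rw [hn2]
  rw [hz] at hlow ⊢
  nlinarith [hlow, hpos, hiden]
end NonAdjCase
section AdjCase
variable {V : Type*} [Fintype V] [DecidableEq V] (G : SimpleGraph V)

lemma adj_case (t w : V) (hadj : G.Adj t w)
    (ha7 : 7 ≤ G.degree t) (hb5 : 5 ≤ G.degree w) (hba : G.degree w ≤ G.degree t)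
    (h13 : 13 ≤ G.degree t + G.degree w) (α β : ℝ) (hab : α ≠ 0 ∨ β ≠ 0) :
    5 * (∑ v, (α * (if v = t then (1:ℝ) else 0)
        + β * (if v = t then (-6:ℝ) else if v = w then 15 else if G.Adj w v then 2 else 0)) ^ 2)
      < (fun v => α * (if v = t then (1:ℝ) else 0)
        + β * (if v = t then (-6:ℝ) else if v = w then 15 else if G.Adj w v then 2 else 0))
        ⬝ᵥ (signlessLaplacian G *ᵥ fun v => α * (if v = t then (1:ℝ) else 0)
        + β * (if v = t then (-6:ℝ) else if v = w then 15 else if G.Adj w v then 2 else 0)) := by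
  classical
  have htw : t ≠ w := hadj.ne
  set z : V → ℝ := fun v => α * (if v = t then (1:ℝ) else 0)
        + β * (if v = t then (-6:ℝ) else if v = w then 15 else if G.Adj w v then 2 else 0) with hz
  have hzt : z t = α - 6 * β := by simp [hz]; ring
  have hzw : z w = 15 * β := by simp [hz, htw.symm]; ring
  have hzS : ∀ v, v ≠ t → v ≠ w → G.Adj w v → z v = 2 * β := by
    intro v h1 h2 h3
    simp [hz, h1, h2, h3]; ring
  have hzP : ∀ v, v ≠ t → v ≠ w → ¬ G.Adj w v → z v = 0 := by
    intro v h1 h2 h3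
    simp [hz, h1, h2, h3]
  set s : ℕ := (G.neighborFinset t ∩ G.neighborFinset w).card with hs
  set a : ℕ := G.degree t with hadeg
  set b : ℕ := G.degree w with hbdeg
  set p : ℕ := (((G.neighborFinset t).erase w).filter
    (fun v => ¬ v ∈ G.neighborFinset w)).card with hp
  set q : ℕ := ((G.neighborFinset w).erase t).card with hq
  have hwNt : w ∈ G.neighborFinset t := (SimpleGraph.mem_neighborFinset G t w).mpr hadj
  have htNw : t ∈ G.neighborFinset w := (SimpleGraph.mem_neighborFinset G w t).mpr hadj.symm
  have hfilter_eq : ((G.neighborFinset t).erase w).filter (fun v => v ∈ G.neighborFinset w)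
      = G.neighborFinset t ∩ G.neighborFinset w := by
    apply Finset.ext
    intro v
    simp only [Finset.mem_filter, Finset.mem_erase, Finset.mem_inter]
    constructor
    · exact fun h => ⟨h.1.2, h.2⟩
    · intro h
      refine ⟨⟨?_, h.1⟩, h.2⟩
      intro hvw
      have hadj' : G.Adj w w := (SimpleGraph.mem_neighborFinset G w w).mp (hvw ▸ h.2)
      exact hadj'.ne rfl
  have hsp : s + p + 1 = a := by
    have h1 : s + p = ((G.neighborFinset t).erase w).card := by
      rw [hs, hp, ← hfilter_eq]
      exact Finset.card_filter_add_card_filter_not _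
    have h2 : ((G.neighborFinset t).erase w).card = (G.neighborFinset t).card - 1 :=
      Finset.card_erase_of_mem hwNt
    have h3 : 1 ≤ (G.neighborFinset t).card := Finset.card_pos.mpr ⟨w, hwNt⟩
    rw [hadeg, ← SimpleGraph.card_neighborFinset_eq_degree]
    omega
  have hqb : q + 1 = b := by
    have h2 : ((G.neighborFinset w).erase t).card = (G.neighborFinset w).card - 1 :=
      Finset.card_erase_of_mem htNw
    have h3 : 1 ≤ (G.neighborFinset w).card := Finset.card_pos.mpr ⟨t, htNw⟩
    rw [hbdeg, ← SimpleGraph.card_neighborFinset_eq_degree]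
    omega
  have hsq : s ≤ q := by
    rw [hs, hq]
    refine Finset.card_le_card ?_
    intro v hv
    rw [Finset.mem_inter] at hv
    rw [Finset.mem_erase]
    refine ⟨?_, hv.2⟩
    intro hvt
    have hadj' : G.Adj t t := (SimpleGraph.mem_neighborFinset G t t).mp (hvt ▸ hv.1)
    exact hadj'.ne rfl
  -- SumT
  have hSumT : ∑ v ∈ G.neighborFinset t, (z t + z v) ^ 2
      = (α + 9 * β) ^ 2 + s * (α - 4 * β) ^ 2 + p * (α - 6 * β) ^ 2 := by
    rw [← Finset.add_sum_erase _ _ hwNt]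
    have hterm : z t + z w = α + 9 * β := by rw [hzt, hzw]; ring
    have hpart1 : ∑ v ∈ ((G.neighborFinset t).erase w).filter
        (fun v => v ∈ G.neighborFinset w), (z t + z v) ^ 2 = s * (α - 4 * β) ^ 2 := by
      have hc : (((G.neighborFinset t).erase w).filter
          (fun v => v ∈ G.neighborFinset w)).card = s := by rw [hs, hfilter_eq]
      rw [sum_const_of _ _ ((α - 4 * β) ^ 2) ?hval, hc]
      case hval =>
        intro v hv
        simp only [Finset.mem_filter, Finset.mem_erase, SimpleGraph.mem_neighborFinset] at hv
        have hvt : v ≠ t := fun h => (h ▸ hv.1.2).ne rfl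
        rw [hzt, hzS v hvt hv.1.1 hv.2]
        ring
    have hpart2 : ∑ v ∈ ((G.neighborFinset t).erase w).filter
        (fun v => ¬ v ∈ G.neighborFinset w), (z t + z v) ^ 2 = p * (α - 6 * β) ^ 2 := by
      rw [sum_const_of _ _ ((α - 6 * β) ^ 2) ?hval2]
      case hval2 =>
        intro v hv
        simp only [Finset.mem_filter, Finset.mem_erase, SimpleGraph.mem_neighborFinset] at hv
        have hvt : v ≠ t := fun h => (h ▸ hv.1.2).ne rfl
        rw [hzt, hzP v hvt hv.1.1 hv.2, add_zero]
    rw [← Finset.sum_filter_add_sum_filter_not ((G.neighborFinset t).erase w)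
      (fun v => v ∈ G.neighborFinset w), hpart1, hpart2, hterm]
    ring
  -- SumW
  have hSumW : ∑ v ∈ G.neighborFinset w, (z w + z v) ^ 2
      = (α + 9 * β) ^ 2 + q * (17 * β) ^ 2 := by
    rw [← Finset.add_sum_erase _ _ htNw]
    have hterm : z w + z t = α + 9 * β := by rw [hzt, hzw]; ring
    have hpart : ∑ v ∈ (G.neighborFinset w).erase t, (z w + z v) ^ 2
        = q * (17 * β) ^ 2 := by
      rw [sum_const_of _ _ ((17 * β) ^ 2) ?hval3]
      case hval3 =>
        intro v hv
        simp only [Finset.mem_erase, SimpleGraph.mem_neighborFinset] at hv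
        have hvw : v ≠ w := fun h => (h ▸ hv.2).ne rfl
        rw [hzw, hzS v hv.1 hvw hv.2]
        ring
    rw [hpart, hterm]
  -- squared norm
  have hn2 : ∑ v, z v ^ 2 = (α - 6 * β) ^ 2 + 225 * β ^ 2 + q * (4 * β ^ 2) := by
    rw [n2_split t w htw z, hzt, hzw]
    have hset : ((Finset.univ \ {t, w}).filter (fun v => v ∈ G.neighborFinset w))
        = (G.neighborFinset w).erase t := by
      apply Finset.ext
      intro v
      simp only [Finset.mem_filter, Finset.mem_sdiff, Finset.mem_univ, true_and,
        Finset.mem_insert, Finset.mem_singleton, Finset.mem_erase]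
      constructor
      · intro h
        push_neg at h
        exact ⟨h.1.1, h.2⟩
      · intro h
        have hvw : v ≠ w := by
          intro hvw
          have hadj' : G.Adj w w := (SimpleGraph.mem_neighborFinset G w w).mp (hvw ▸ h.2)
          exact hadj'.ne rfl
        exact ⟨by push_neg; exact ⟨h.1, hvw⟩, h.2⟩
    have hrest : ∑ v ∈ Finset.univ \ {t, w}, z v ^ 2 = q * (4 * β ^ 2) := by
      rw [← Finset.sum_filter_add_sum_filter_not (Finset.univ \ {t, w})
        (fun v => v ∈ G.neighborFinset w)]
      have h2 : ∑ v ∈ (Finset.univ \ {t, w}).filter (fun v => v ∈ G.neighborFinset w),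
          z v ^ 2 = q * (4 * β ^ 2) := by
        rw [sum_const_of _ _ (4 * β ^ 2) ?hval4]
        · rw [hset, hq]
        case hval4 =>
          intro v hv
          rw [hset, Finset.mem_erase, SimpleGraph.mem_neighborFinset] at hv
          have hvw : v ≠ w := fun h => (h ▸ hv.2).ne rfl
          rw [hzS v hv.1 hvw hv.2]
          ring
      have h3 : ∑ v ∈ (Finset.univ \ {t, w}).filter (fun v => ¬ v ∈ G.neighborFinset w),
          z v ^ 2 = 0 := by
        refine Finset.sum_eq_zero fun v hv => ?_
        rw [Finset.mem_filter, Finset.mem_sdiff, Finset.mem_insert, Finset.mem_singleton] at hv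
        push_neg at hv
        rw [SimpleGraph.mem_neighborFinset] at hv
        rw [hzP v hv.1.2.1 hv.1.2.2 hv.2]
        ring
      rw [h2, h3, add_zero]
    rw [hrest]
    ring
  -- lower bound
  have hlow := qf_pair_lower G t w htw z
  have hetw : G.adjMatrix ℝ t w = 1 := by simp [hadj]
  rw [hSumT, hSumW, hetw] at hlow
  have hztzw : z t + z w = α + 9 * β := by rw [hzt, hzw]; ring
  rw [hztzw] at hlow
  -- numerics
  have haR : (7:ℝ) ≤ (a:ℝ) := by exact_mod_cast ha7
  have hbR : (5:ℝ) ≤ (b:ℝ) := by exact_mod_cast hb5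
  have hbaR : (b:ℝ) ≤ (a:ℝ) := by exact_mod_cast hba
  have h13R : (13:ℝ) ≤ (a:ℝ) + (b:ℝ) := by exact_mod_cast h13
  have hS0 : (0:ℝ) ≤ (s:ℝ) := Nat.cast_nonneg s
  have hp0 : (0:ℝ) ≤ (p:ℝ) := Nat.cast_nonneg p
  have hspR : (s:ℝ) + (p:ℝ) + 1 = (a:ℝ) := by exact_mod_cast hsp
  have hqbR : (q:ℝ) + 1 = (b:ℝ) := by exact_mod_cast hqb
  have hsqR : (s:ℝ) ≤ (q:ℝ) := by exact_mod_cast hsq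
  have hsb1 : (s:ℝ) + 1 ≤ (b:ℝ) := by linarith
  have hdet : (45 - 6 * (a:ℝ) + 2 * (s:ℝ)) ^ 2
      < ((a:ℝ) - 5) * (36 * (a:ℝ) + 269 * (b:ℝ) - 20 * (s:ℝ) - 1529) := by
    have hA : (0:ℝ) ≤ (a:ℝ) - 7 := by linarith
    have hB : (0:ℝ) ≤ (b:ℝ) - 5 := by linarith
    have hK : (0:ℝ) ≤ (a:ℝ) - (b:ℝ) := by linarith
    have hM : (0:ℝ) ≤ (b:ℝ) - 1 - (s:ℝ) := by linarith
    have hT : (0:ℝ) ≤ (a:ℝ) + (b:ℝ) - 13 := by linarith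
    nlinarith [mul_nonneg hB hK, mul_nonneg hK hM, mul_nonneg hM hS0, mul_nonneg hS0 hT,
      mul_nonneg hA hS0, mul_nonneg hA hB, mul_nonneg hM hM]
  have hpos := pd2 (m11 := (a:ℝ) - 5) (m12 := 45 - 6 * (a:ℝ) + 2 * (s:ℝ))
    (m22 := 36 * (a:ℝ) + 269 * (b:ℝ) - 20 * (s:ℝ) - 1529) (by linarith) hdet hab
  have hiden : ((α + 9 * β) ^ 2 + (s:ℝ) * (α - 4 * β) ^ 2 + (p:ℝ) * (α - 6 * β) ^ 2)
      + ((α + 9 * β) ^ 2 + (q:ℝ) * (17 * β) ^ 2) - 1 * (α + 9 * β) ^ 2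
      - 5 * ((α - 6 * β) ^ 2 + 225 * β ^ 2 + (q:ℝ) * (4 * β ^ 2))
      = ((a:ℝ) - 5) * α ^ 2 + 2 * (45 - 6 * (a:ℝ) + 2 * (s:ℝ)) * (α * β)
        + (36 * (a:ℝ) + 269 * (b:ℝ) - 20 * (s:ℝ) - 1529) * β ^ 2 := by
    rw [← hspR, ← hqbR]
    ring
  rw [hn2]
  rw [hz] at hlow ⊢
  linarith [hlow, hpos, hiden]

end AdjCase
section MainAux
variable {V : Type*} [Fintype V] [DecidableEq V] (G : SimpleGraph V)

lemma signless_mulVec_apply (x : V → ℝ) (u : V) :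
    (signlessLaplacian G *ᵥ x) u = (G.degree u : ℝ) * x u + ∑ v ∈ G.neighborFinset u, x v := by
  rw [signlessLaplacian, Matrix.add_mulVec]
  simp [Matrix.mulVec_diagonal]

end MainAux

theorem structure_from_spectrum {V : Type*} [Fintype V] [DecidableEq V]
    (G : SimpleGraph V) (n : ℕ) (hn : n = Fintype.card V) (h12 : 12 ≤ n)
    (hQ : (signlessLaplacian G).IsHermitian)
    (hpos : 0 < ithEig hQ (n - 1)) (hk2 : ithEig hQ 1 ≤ 5)
    (h5n : (5 : ℝ) < n) (hk1 : (n : ℝ) < ithEig hQ 0) :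
    G.Connected ∧ ∃ v : V, n - 3 ≤ G.degree v ∧ ∀ w, w ≠ v → G.degree w ≤ 4 := by
  classical
  have hcard : Fintype.card V = n := hn.symm
  have hcpos : 0 < Fintype.card V := by omega
  have hNV : Nonempty V := Fintype.card_pos_iff.mp hcpos
  have hpos' : 0 < ithEig hQ (Fintype.card V - 1) := by rw [hcard]; exact hpos
  have hker : ∀ x : V → ℝ, x ≠ 0 → signlessLaplacian G *ᵥ x ≠ 0 :=
    fun x hx => no_kernel hQ hpos' x hx
  -- max degree vertex
  have huniv : (Finset.univ : Finset V).Nonempty := Finset.univ_nonempty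
  obtain ⟨t, -, htmax⟩ := Finset.exists_max_image (α := ℕ) Finset.univ (fun v => G.degree v) huniv
  have herase_ne : (Finset.univ.erase t).Nonempty := by
    rw [← Finset.card_pos, Finset.card_erase_of_mem (Finset.mem_univ t), Finset.card_univ]
    omega
  obtain ⟨w0, hw0mem, hw0max⟩ := Finset.exists_max_image (α := ℕ) (Finset.univ.erase t) (fun v => G.degree v) herase_ne
  have hw0ne : w0 ≠ t := (Finset.mem_erase.mp hw0mem).1
  set A : ℕ := G.degree t with hA
  set B : ℕ := G.degree w0 with hB
  have hdegA : ∀ u, (G.degree u : ℝ) ≤ (A : ℝ) :=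
    fun u => by exact_mod_cast htmax u (Finset.mem_univ u)
  have hdegB : ∀ u, u ≠ t → (G.degree u : ℝ) ≤ (B : ℝ) := fun u hu => by
    exact_mod_cast hw0max u (Finset.mem_erase.mpr ⟨hu, Finset.mem_univ u⟩)
  have hub : ithEig hQ 0 ≤ (A : ℝ) + (B : ℝ) :=
    top_le_of_qf_bound hQ ((A:ℝ) + (B:ℝ))
      (fun z => qf_upper G t (A:ℝ) (B:ℝ) (Nat.cast_nonneg B) hdegA hdegB z)
  have h13 : 13 ≤ A + B := by
    have : (n:ℝ) < (A:ℝ) + (B:ℝ) := lt_of_lt_of_le hk1 hub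
    have : n < A + B := by exact_mod_cast this
    omega
  have hBA : B ≤ A := htmax w0 (Finset.mem_univ w0)
  have hA7 : 7 ≤ A := by omega
  -- second largest degree at most 4
  have hsmall : ∀ u, u ≠ t → G.degree u ≤ 4 := by
    by_contra hc
    push_neg at hc
    obtain ⟨u, hut, hu5⟩ := hc
    have hw05 : 5 ≤ B := by
      have := hw0max u (Finset.mem_erase.mpr ⟨hut, Finset.mem_univ u⟩)
      omega
    have h5lt : 5 < ithEig hQ 1 := by
      by_cases hadj : G.Adj t w0
      · exact second_eig_lower hQ (fun v => if v = t then (1:ℝ) else 0)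
          (fun v => if v = t then (-6:ℝ) else if v = w0 then 15 else if G.Adj w0 v then 2 else 0)
          (fun α β hab => adj_case G t w0 hadj hA7 hw05 hBA h13 α β hab)
      · exact second_eig_lower hQ (fun v => if v = t then (1:ℝ) else 0)
          (fun v => if v = w0 then (3:ℝ) else if G.Adj w0 v then 1 else 0)
          (fun α β hab => nonadj_case G t w0 hw0ne.symm hadj hA7 hw05 hBA h13 α β hab)
    linarith
  -- max degree at least n - 3
  have hup2 : ithEig hQ 0 ≤ (A : ℝ) + 4 :=
    top_le_of_qf_bound hQ ((A:ℝ) + 4)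
      (fun z => qf_upper G t (A:ℝ) 4 (by norm_num) hdegA
        (fun u hu => by exact_mod_cast hsmall u hu) z)
  have hAn : n < A + 4 := by
    have : (n:ℝ) < (A:ℝ) + 4 := lt_of_lt_of_le hk1 hup2
    exact_mod_cast this
  -- connectivity
  have hreach : ∀ p, G.Reachable t p := by
    by_contra hcon
    push_neg at hcon
    obtain ⟨p, hp⟩ := hcon
    set C : Finset V := Finset.univ.filter (fun v => G.Reachable t v) with hC
    have hsub : insert t (G.neighborFinset t) ⊆ C := by
      intro v hv
      rcases Finset.mem_insert.mp hv with rfl | hv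
      · exact Finset.mem_filter.mpr ⟨Finset.mem_univ _, SimpleGraph.Reachable.refl v⟩
      · rw [SimpleGraph.mem_neighborFinset] at hv
        exact Finset.mem_filter.mpr ⟨Finset.mem_univ _, hv.reachable⟩
    have hcardC : A + 1 ≤ C.card := by
      have h1 : (insert t (G.neighborFinset t)).card = A + 1 := by
        rw [Finset.card_insert_of_notMem, SimpleGraph.card_neighborFinset_eq_degree]
        intro h
        rw [SimpleGraph.mem_neighborFinset] at h
        exact h.ne rfl
      calc A + 1 = (insert t (G.neighborFinset t)).card := h1.symm
        _ ≤ C.card := Finset.card_le_card hsub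
    have hD : ∀ v, v ∈ Finset.univ \ C ↔ ¬ G.Reachable t v := by
      intro v
      simp [hC, Finset.mem_sdiff]
    have hpD : p ∈ Finset.univ \ C := (hD p).mpr hp
    have hcardD : (Finset.univ \ C).card ≤ 2 := by
      have := Finset.card_sdiff_add_card_eq_card (Finset.subset_univ C)
      rw [Finset.card_univ, hcard] at this
      omega
    have hND : ∀ q r, q ∈ Finset.univ \ C → G.Adj q r → r ∈ Finset.univ \ C := by
      intro q r hq hadj
      rw [hD] at hq ⊢
      intro hr
      exact hq (hr.trans hadj.symm.reachable)
    by_cases hiso : ∀ r, ¬ G.Adj p r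
    · set x : V → ℝ := fun v => if v = p then 1 else 0 with hx
      have hx0 : x ≠ 0 := by
        intro h
        have := congrFun h p
        simp [hx] at this
      refine hker x hx0 ?_
      funext u
      rw [signless_mulVec_apply]
      rcases eq_or_ne u p with rfl | hup
      · have hdeg : G.degree u = 0 := by
          rw [← SimpleGraph.card_neighborFinset_eq_degree, Finset.card_eq_zero]
          apply Finset.eq_empty_of_forall_notMem
          intro r hr
          rw [SimpleGraph.mem_neighborFinset] at hr
          exact hiso r hr
        have hsum : ∑ v ∈ G.neighborFinset u, x v = 0 := by
          refine Finset.sum_eq_zero fun v hv => ?_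
          rw [SimpleGraph.mem_neighborFinset] at hv
          exact absurd hv (hiso v)
        rw [hdeg, hsum]
        simp
      · have hsum : ∑ v ∈ G.neighborFinset u, x v = 0 := by
          refine Finset.sum_eq_zero fun v hv => ?_
          rw [SimpleGraph.mem_neighborFinset] at hv
          have : v ≠ p := fun h => hiso u ((h ▸ hv).symm)
          simp [hx, this]
        rw [hsum]
        simp [hx, hup]
    · push_neg at hiso
      obtain ⟨q, hq⟩ := hiso
      have hqD : q ∈ Finset.univ \ C := hND p q hpD hq
      have hpq : p ≠ q := hq.ne
      have hDeq : Finset.univ \ C = {p, q} := by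
        symm
        apply Finset.eq_of_subset_of_card_le
        · intro v hv
          rcases Finset.mem_insert.mp hv with rfl | hv
          · exact hpD
          · rw [Finset.mem_singleton.mp hv]
            exact hqD
        · rw [Finset.card_pair hpq]
          exact hcardD
      have hNp : ∀ r, G.Adj p r → r = q := by
        intro r hr
        have := hND p r hpD hr
        rw [hDeq, Finset.mem_insert, Finset.mem_singleton] at this
        rcases this with rfl | h
        · exact absurd hr (G.loopless.irrefl r)
        · exact h
      have hNq : ∀ r, G.Adj q r → r = p := by
        intro r hr
        have := hND q r hqD hr
        rw [hDeq, Finset.mem_insert, Finset.mem_singleton] at this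
        rcases this with h | rfl
        · exact h
        · exact absurd hr (G.loopless.irrefl r)
      have hNpfin : G.neighborFinset p = {q} := by
        apply Finset.ext
        intro r
        rw [SimpleGraph.mem_neighborFinset, Finset.mem_singleton]
        exact ⟨hNp r, fun h => h ▸ hq⟩
      have hNqfin : G.neighborFinset q = {p} := by
        apply Finset.ext
        intro r
        rw [SimpleGraph.mem_neighborFinset, Finset.mem_singleton]
        exact ⟨hNq r, fun h => h ▸ hq.symm⟩
      have hdp : G.degree p = 1 := by
        rw [← SimpleGraph.card_neighborFinset_eq_degree, hNpfin, Finset.card_singleton]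
      have hdq : G.degree q = 1 := by
        rw [← SimpleGraph.card_neighborFinset_eq_degree, hNqfin, Finset.card_singleton]
      set x : V → ℝ := fun v => if v = p then 1 else if v = q then -1 else 0 with hx
      have hx0 : x ≠ 0 := by
        intro h
        have := congrFun h p
        simp [hx] at this
      refine hker x hx0 ?_
      funext u
      rw [signless_mulVec_apply]
      rcases eq_or_ne u p with rfl | hup
      · rw [hdp, hNpfin, Finset.sum_singleton]
        simp [hx, hpq, hpq.symm]
      · rcases eq_or_ne u q with rfl | huq
        · rw [hdq, hNqfin, Finset.sum_singleton]
          simp [hx, hpq, hpq.symm]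
        · have hsum : ∑ v ∈ G.neighborFinset u, x v = 0 := by
            refine Finset.sum_eq_zero fun v hv => ?_
            rw [SimpleGraph.mem_neighborFinset] at hv
            have hvp : v ≠ p := fun h => huq (hNp u (h ▸ hv).symm)
            have hvq : v ≠ q := fun h => hup (hNq u (h ▸ hv).symm)
            simp [hx, hvp, hvq]
          rw [hsum]
          simp [hx, hup, huq]
  have hconn : G.Connected := by
    rw [SimpleGraph.connected_iff]
    exact ⟨fun u v => (hreach u).symm.trans (hreach v), hNV⟩
  refine ⟨hconn, t, by omega, fun w hw => hsmall w hw⟩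
end
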